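/- arXiv:2110.15330 — 6 statements merged into one kernel-verified Lean document; each statement's English description precedes it below -/
import Mathlib

section
/- Let N be a bipartite quantum channel from system AB to system AB' (A of dimension dA, B of dimension dB, B' of dimension dB') that is A↛B' semi-causal, and let J denote its Choi matrix, a positive semidefinite matrix on (input A) ⊗ (input B) ⊗ (output A) ⊗ (output B'). Then the partial trace of J over the output-A factor factorizes as J_{ABB'} = u_A ⊗ J_{BB'}, where J_{BB'} is the partial trace of J over both the input-A and output-A factors and u_A = I_{dA}/dA. -/
open Matrix Kronecker
open scoped ComplexOrder

noncomputable section

open scoped Classical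

/-- Square complex matrices of size `n`. -/
abbrev Mat (n : ℕ) := Matrix (Fin n) (Fin n) ℂ

/-- Bipartite matrices on `ℂ^a ⊗ ℂ^b`. -/
abbrev BMat (a b : ℕ) := Matrix (Fin a × Fin b) (Fin a × Fin b) ℂ

/-- A density matrix: positive semidefinite with trace one. -/
def IsDensity {ι : Type} [Fintype ι] (ρ : Matrix ι ι ℂ) : Prop :=
  ρ.PosSemidef ∧ ρ.trace = 1

/-- The maximally mixed state `I/n`. -/
def uMat (n : ℕ) : Mat n := (n : ℂ)⁻¹ • 1

/-- Choi matrix of a map on matrices. -/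
def choi {ι κ : Type} [Fintype ι] [DecidableEq ι]
    (Φ : Matrix ι ι ℂ → Matrix κ κ ℂ) : Matrix (ι × κ) (ι × κ) ℂ :=
  fun p q => Φ (Matrix.single p.1 q.1 1) p.2 q.2

/-- Quantum channel: linear, trace preserving, completely positive map. -/
def IsCPTP {ι κ : Type} [Fintype ι] [DecidableEq ι] [Fintype κ]
    (Φ : Matrix ι ι ℂ → Matrix κ κ ℂ) : Prop :=
  IsLinearMap ℂ Φ ∧ (∀ X, (Φ X).trace = X.trace) ∧ (choi Φ).PosSemidef

/-- Completely positive (not necessarily trace-preserving) map. -/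
def IsCP {ι κ : Type} [Fintype ι] [DecidableEq ι] [Fintype κ]
    (Φ : Matrix ι ι ℂ → Matrix κ κ ℂ) : Prop :=
  IsLinearMap ℂ Φ ∧ (choi Φ).PosSemidef

/-- Partial trace over the first tensor factor. -/
def ptraceA {α β : Type} [Fintype α] (M : Matrix (α × β) (α × β) ℂ) :
    Matrix β β ℂ := fun j j' => ∑ i, M (i, j) (i, j')

/-- Partial trace over the second tensor factor. -/
def ptraceB {α β : Type} [Fintype β] (M : Matrix (α × β) (α × β) ℂ) :
    Matrix α α ℂ := fun i i' => ∑ j, M (i, j) (i', j)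

/-- The map `Φ ⊗ id` acting on the first tensor factor. -/
def lTensorId {α α' β : Type} (Φ : Matrix α α ℂ → Matrix α' α' ℂ)
    (X : Matrix (α × β) (α × β) ℂ) : Matrix (α' × β) (α' × β) ℂ :=
  fun p q => Φ (fun k k' => X (k, p.2) (k', q.2)) p.1 q.1

/-- The map `id ⊗ Φ` acting on the second tensor factor. -/
def rTensorId {α β β' : Type} (Φ : Matrix β β ℂ → Matrix β' β' ℂ)
    (X : Matrix (α × β) (α × β) ℂ) : Matrix (α × β') (α × β') ℂ :=
  fun p q => Φ (fun k k' => X (p.1, k) (q.1, k')) p.2 q.2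

/-- `A ↛ B'` semi-causality of a bipartite channel. -/
def SemiCausal {a b b' : ℕ} (N : BMat a b → BMat a b') : Prop :=
  ∀ M : Mat a → Mat a, IsCPTP M →
    ∀ X : BMat a b, ptraceA (N (lTensorId M X)) = ptraceA (N X)

/-- Conditional unitality of a bipartite channel. -/
def CondUnital {a b b' : ℕ} (N : BMat a b → BMat a b') : Prop :=
  ∀ ρ : Mat b, IsDensity ρ →
    ∃ σ : Mat b', IsDensity σ ∧ N (uMat a ⊗ₖ ρ) = uMat a ⊗ₖ σ

/-- Conditionally unital semi-causal channels. -/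
def CUSC {a b b' : ℕ} (N : BMat a b → BMat a b') : Prop :=
  IsCPTP N ∧ CondUnital N ∧ SemiCausal N

/-- The channel `X ↦ V X V†` associated with a matrix `V`. -/
def isomChannel {a a' : ℕ} (V : Matrix (Fin a') (Fin a) ℂ) (X : Mat a) : Mat a' :=
  V * X * Vᴴ

/-- Conditional majorization `σ ≾_A ρ`. -/
def CondMajor {a' b' a b : ℕ} (σ : BMat a' b') (ρ : BMat a b) : Prop :=
  (a ≤ a' ∧ ∃ V : Matrix (Fin a') (Fin a) ℂ, Vᴴ * V = 1 ∧
      ∃ N : BMat a b → BMat a b', CUSC N ∧ σ = lTensorId (isomChannel V) (N ρ)) ∨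
  (a' ≤ a ∧ ∃ U : Matrix (Fin a) (Fin a') ℂ, Uᴴ * U = 1 ∧
      ∃ N : BMat a b → BMat a b', CUSC N ∧ lTensorId (isomChannel U) σ = N ρ)

/-- The tensor product `ρ_{AB} ⊗ τ_{A'B'}` regrouped as a state on `(AA')(BB')`. -/
def prodState {a b a' b' : ℕ} (ρ : BMat a b) (τ : BMat a' b') :
    BMat (a * a') (b * b') := fun p q =>
  ρ ((finProdFinEquiv.symm p.1).1, (finProdFinEquiv.symm p.2).1)
    ((finProdFinEquiv.symm q.1).1, (finProdFinEquiv.symm q.2).1) *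
  τ ((finProdFinEquiv.symm p.1).2, (finProdFinEquiv.symm p.2).2)
    ((finProdFinEquiv.symm q.1).2, (finProdFinEquiv.symm q.2).2)

/-- A conditional entropy: a real function on bipartite density matrices of all
finite dimensions, monotone under conditional majorization, additive under tensor
products, and normalized to `1` on the one-qubit maximally mixed state. -/
structure CondEntropy where
  H : ∀ {a b : ℕ}, BMat a b → ℝ
  mono : ∀ {a b a' b' : ℕ} (ρ : BMat a b) (σ : BMat a' b'),
    IsDensity ρ → IsDensity σ → CondMajor σ ρ → H ρ ≤ H σ
  additive : ∀ {a b a' b' : ℕ} (ρ : BMat a b) (τ : BMat a' b'),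
    IsDensity ρ → IsDensity τ → H (prodState ρ τ) = H ρ + H τ
  normalized : H (uMat 2 ⊗ₖ (1 : Mat 1)) = 1

/-- Maximally entangled state `φ⁺` on `ℂ^d ⊗ ℂ^d`. -/
def maxEnt (d : ℕ) : BMat d d :=
  fun p q => if p.1 = p.2 ∧ q.1 = q.2 then (d : ℂ)⁻¹ else 0

/-- The sum of the `k` largest values of `f`. -/
def sumTopK {ι : Type} [Fintype ι] [DecidableEq ι] (k : ℕ) (f : ι → ℝ) : ℝ :=
  (Finset.univ.powerset.filter fun s : Finset ι => s.card ≤ k).sup'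
    ⟨∅, Finset.mem_filter.mpr ⟨Finset.mem_powerset.mpr (Finset.empty_subset _), by simp⟩⟩
    fun s => ∑ i ∈ s, f i

/-- Ky Fan `k`-norm (sum of the `k` largest eigenvalues) of a hermitian matrix. -/
def kyFan {ι : Type} [Fintype ι] [DecidableEq ι] (k : ℕ) (X : Matrix ι ι ℂ) : ℝ :=
  if h : X.IsHermitian then sumTopK k h.eigenvalues else 0

/-- The rank-one projector `|v⟩⟨v|`. -/
def projv {n : ℕ} (v : Fin n → ℂ) : Mat n := fun i j => v i * star (v j)

/-- A rank-one projective measurement, given by an orthonormal family of vectors. -/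
def IsRankOneMeas {n : ℕ} (u : Fin n → Fin n → ℂ) : Prop :=
  ∀ z z', (∑ i, star (u z i) * u z' i) = if z = z' then 1 else 0

/-- A column-stochastic matrix. -/
def ColStochastic {a c : ℕ} (T : Matrix (Fin a) (Fin c) ℝ) : Prop :=
  (∀ w z, 0 ≤ T w z) ∧ ∀ z, ∑ w, T w z = 1

/-- Reward of the bipartite gambling game `(T, 0)` (no adversary). -/
def R0 {a b c : ℕ} (T : Matrix (Fin a) (Fin c) ℝ) (ρ : BMat a b) : ℝ :=
  ⨆ u : {u : Fin b → Fin b → ℂ // IsRankOneMeas u}, ⨆ f : Fin b → Fin c,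
    ∑ z, ∑ w, T w (f z) *
      kyFan (w.1 + 1)
        (ptraceB (((1 : Mat a) ⊗ₖ projv (u.1 z)) * ρ * ((1 : Mat a) ⊗ₖ projv (u.1 z))))

/-- Reward of the bipartite gambling game `(T, p)`. -/
def Rgame {a b c : ℕ} (T : Matrix (Fin a) (Fin c) ℝ) (p : ℝ) (ρ : BMat a b) : ℝ :=
  p * (⨅ v : {v : Fin a → Fin a → ℂ // IsRankOneMeas v},
        R0 T (∑ j, (projv (v.1 j) ⊗ₖ (1 : Mat b)) * ρ * (projv (v.1 j) ⊗ₖ (1 : Mat b)))) +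
  (1 - p) * R0 T ρ

/-- Reward of a quantum-channel gambling game `ρ_{ABX} = Σ_x p_x ρ^{(x)}_{AB} ⊗ |x⟩⟨x|`
for a channel `N` with output system `A`. -/
def Rch {n m dA b ℓ : ℕ} (N : Mat n → Mat m)
    (p : Fin ℓ → ℝ) (ρx : Fin ℓ → BMat dA b) : ℝ :=
  ⨆ E : {E : Mat dA → Mat n // IsCPTP E},
    ∑ x, p x * kyFan (x.1 + 1) (lTensorId (fun Y => N (E.1 Y)) (ρx x))

/-- The classical channel induced by a column-stochastic transition matrix. -/
def classicalChannel {x y : ℕ} (P : Matrix (Fin y) (Fin x) ℝ) : Mat x → Mat y :=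
  fun ρ => Matrix.of fun i j => if i = j then ∑ k, (P i k : ℂ) * ρ k k else 0

/-- Classical game reward `Prob_T` of a classical channel with transition matrix `P`. -/
def ProbT {yd xd wn zn : ℕ} (P : Matrix (Fin yd) (Fin xd) ℝ)
    (T : Matrix (Fin wn) (Fin zn) ℝ) : ℝ :=
  ∑ z, ⨆ x : Fin xd, ∑ w, T w z * sumTopK (w.1 + 1) (fun i => P i x)

/-- A joint probability matrix. -/
def JointProb {m n : ℕ} (P : Matrix (Fin m) (Fin n) ℝ) : Prop :=
  (∀ x y, 0 ≤ P x y) ∧ ∑ x, ∑ y, P x y = 1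

/-- A row-stochastic matrix. -/
def RowStochastic {n n' : ℕ} (t : Matrix (Fin n) (Fin n') ℝ) : Prop :=
  (∀ y w, 0 ≤ t y w) ∧ ∀ y, ∑ w, t y w = 1

/-- A doubly stochastic matrix. -/
def IsDoublyStochastic {m : ℕ} (d : Matrix (Fin m) (Fin m) ℝ) : Prop :=
  (∀ i j, 0 ≤ d i j) ∧ (∀ i, ∑ j, d i j = 1) ∧ (∀ j, ∑ i, d i j = 1)

/-- The quantum channel induced by a (doubly) stochastic matrix. -/
def dsChannel {m : ℕ} (d : Matrix (Fin m) (Fin m) ℝ) : Mat m → Mat m :=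
  fun ρ => Matrix.of fun x x' => if x = x' then ∑ y, (d x y : ℂ) * ρ y y else 0

/-- Diagonal bipartite state associated with a joint probability matrix. -/
def classicalState {m n : ℕ} (P : Matrix (Fin m) (Fin n) ℝ) : BMat m n :=
  Matrix.of fun p q => if p = q then (P p.1 p.2 : ℂ) else 0

/-- von Neumann entropy `S(ρ) = -Σ λ_i log₂ λ_i`. -/
def vnEntropy {ι : Type} [Fintype ι] [DecidableEq ι] (ρ : Matrix ι ι ℂ) : ℝ :=
  if h : ρ.IsHermitian then -∑ i, h.eigenvalues i * Real.logb 2 (h.eigenvalues i) else 0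

/-- von Neumann conditional entropy `H(A|B) = S(ρ_AB) - S(ρ_B)`. -/
def condVN {a b : ℕ} (ρ : BMat a b) : ℝ := vnEntropy ρ - vnEntropy (ptraceA ρ)

/-- Classical game reward for a classical bipartite state with joint distribution `q`
(`y` on `A`, `z` on `B`). -/
def ProbTstate {a b c : ℕ} (T : Matrix (Fin a) (Fin c) ℝ)
    (q : Matrix (Fin a) (Fin b) ℝ) : ℝ :=
  ∑ z, ⨆ z' : Fin c, ∑ w, T w z' * sumTopK (w.1 + 1) (fun y => q y z)


def depol (a : ℕ) : Mat a → Mat a := fun Y => Y.trace • uMat a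

lemma uMat_trace (a : ℕ) (ha : 0 < a) : (uMat a).trace = 1 := by
  have hane : (a : ℂ) ≠ 0 := Nat.cast_ne_zero.mpr ha.ne'
  simp [uMat, Matrix.trace_smul, Matrix.trace_one, smul_eq_mul]
  field_simp

lemma depol_cptp (a : ℕ) (ha : 0 < a) : IsCPTP (depol a) := by
  refine ⟨⟨fun X Y => by simp [depol, Matrix.trace_add, add_smul],
    fun c X => by simp [depol, Matrix.trace_smul, smul_smul]⟩, fun X => ?_, ?_⟩
  · simp [depol, Matrix.trace_smul, uMat_trace a ha, smul_eq_mul]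
  · have : choi (depol a) = Matrix.diagonal (fun _ : Fin a × Fin a => (a : ℂ)⁻¹) := by
      ext ⟨p1, p2⟩ ⟨q1, q2⟩
      simp only [choi, depol, Matrix.smul_apply, smul_eq_mul, uMat,
        Matrix.one_apply, Matrix.diagonal_apply, Prod.mk.injEq]
      by_cases h1 : p1 = q1
      · subst h1
        rw [Matrix.trace_single_eq_same]
        by_cases h2 : p2 = q2 <;> simp [h2]
      · rw [Matrix.trace_single_eq_of_ne _ _ _ h1]
        simp [h1]
    rw [this]
    refine Matrix.posSemidef_diagonal_iff.mpr fun _ => ?_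
    rw [show ((a : ℂ))⁻¹ = (((a : ℝ)⁻¹ : ℝ) : ℂ) by push_cast; ring]
    exact Complex.zero_le_real.mpr (by positivity)


/-- the Choi matrix of a semi-causal bipartite channel satisfies
`J_{ABB'} = u_A ⊗ J_{BB'}` (stated entrywise). -/
theorem semiCausal_choi_factorizes {a b b' : ℕ}
    (N : BMat a b → BMat a b') (hN : IsCPTP N) (hsc : SemiCausal N)
    (i i' : Fin a) (j j' : Fin b) (k k' : Fin b') :
    (∑ l : Fin a, choi N ((i, j), (l, k)) ((i', j'), (l, k'))) =
      uMat a i i' *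
        ∑ mm : Fin a, ∑ l : Fin a, choi N ((mm, j), (l, k)) ((mm, j'), (l, k')) := by
  have ha : 0 < a := i.pos
  set X : BMat a b := Matrix.single (i, j) (i', j') (1 : ℂ) with hX
  have hkey : lTensorId (depol a) X =
      (if i = i' then (a : ℂ)⁻¹ else 0) •
        ∑ m : Fin a, Matrix.single ((m, j) : Fin a × Fin b) (m, j') (1 : ℂ) := by
    ext ⟨p1, p2⟩ ⟨q1, q2⟩
    simp only [lTensorId, depol, hX, Matrix.smul_apply, Matrix.sum_apply,
      smul_eq_mul, uMat, Matrix.one_apply, Matrix.single, Matrix.of_apply,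
      Prod.mk.injEq, Matrix.trace, Matrix.diag_apply, Matrix.diag]
    have h1 : (∑ m : Fin a, if (i = m ∧ j = p2) ∧ i' = m ∧ j' = q2 then (1:ℂ) else 0)
        = if i = i' ∧ j = p2 ∧ j' = q2 then 1 else 0 := by
      by_cases hj : j = p2 <;> by_cases hj' : j' = q2 <;> by_cases hii : i = i' <;>
        simp [hj, hj', hii, ite_and, Finset.sum_ite_eq, and_comm] <;>
        [skip] <;> intro h <;> exact hii h.symm
    have h2 : (∑ m : Fin a, if (m = p1 ∧ j = p2) ∧ m = q1 ∧ j' = q2 then (1:ℂ) else 0)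
        = if p1 = q1 ∧ j = p2 ∧ j' = q2 then 1 else 0 := by
      by_cases hj : j = p2 <;> by_cases hj' : j' = q2 <;> by_cases hpq : p1 = q1 <;>
        simp [hj, hj', hpq, ite_and, Finset.sum_ite_eq', and_comm]
    rw [h1, h2]
    by_cases hii : i = i' <;> by_cases hpq : p1 = q1 <;>
      by_cases hj : j = p2 <;> by_cases hj' : j' = q2 <;> simp [hii, hpq, hj, hj']
  have hlin := hN.1
  let Nl : BMat a b →ₗ[ℂ] BMat a b' := IsLinearMap.mk' N hlin
  have hsc' := hsc (depol a) (depol_cptp a ha) X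
  have LHSeq : (∑ l : Fin a, choi N ((i, j), (l, k)) ((i', j'), (l, k'))) =
      ptraceA (N X) k k' := by
    simp [choi, ptraceA, hX]
  rw [LHSeq, ← congrFun (congrFun hsc' k) k']
  have hNX : N (lTensorId (depol a) X) =
      (if i = i' then (a : ℂ)⁻¹ else 0) •
        ∑ m : Fin a, N (Matrix.single ((m, j) : Fin a × Fin b) (m, j') (1 : ℂ)) := by
    rw [hkey, show N = (Nl : BMat a b → BMat a b') from rfl, Nl.map_smul, map_sum]
  rw [hNX]
  simp only [ptraceA, choi, Matrix.smul_apply, Matrix.sum_apply, smul_eq_mul]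
  rw [← Finset.mul_sum, Finset.sum_comm]
  congr 1
  by_cases h : i = i' <;> simp [uMat, Matrix.one_apply, h]
end
end

section
/- For any conditional entropy H and any density matrices ω on ℂ^{dA}, τ on ℂ^{dB}, τ' on ℂ^{dB'}: H(A|B)_{ω⊗τ} = H(A|B')_{ω⊗τ'}. In particular, the value of H on any product state ω_A ⊗ τ_B equals H(A)_ω, its value on ω with trivial B. -/
open Matrix Kronecker
open scoped ComplexOrder

noncomputable section

open scoped Classical

section Aux

lemma psd_eq_ct_mul_self {n : Type} [Fintype n] [DecidableEq n] {A : Matrix n n ℂ}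
    (hA : A.PosSemidef) : ∃ B : Matrix n n ℂ, A = Bᴴ * B := by
  open scoped MatrixOrder Matrix.Norms.L2Operator in
  obtain ⟨B, hB⟩ := CStarAlgebra.nonneg_iff_eq_star_mul_self.mp hA.nonneg
  exact ⟨B, hB⟩

lemma kron_conjT {m n m' n' : Type} [Fintype m] [Fintype n] [Fintype m'] [Fintype n']
    (A : Matrix m n ℂ) (B : Matrix m' n' ℂ) : (A ⊗ₖ B)ᴴ = Aᴴ ⊗ₖ Bᴴ := by
  ext ⟨i, j⟩ ⟨k, l⟩
  simp [Matrix.conjTranspose_apply, star_mul']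

lemma IsDensity.kron {m n : ℕ} {A : Mat m} {B : Mat n} (hA : IsDensity A) (hB : IsDensity B) :
    IsDensity (A ⊗ₖ B) := by
  obtain ⟨P, hP⟩ := psd_eq_ct_mul_self hA.1
  obtain ⟨Q, hQ⟩ := psd_eq_ct_mul_self hB.1
  constructor
  · rw [hP, hQ, Matrix.mul_kronecker_mul, ← kron_conjT]
    exact Matrix.posSemidef_conjTranspose_mul_self _
  · rw [Matrix.trace_kronecker, hA.2, hB.2, one_mul]

lemma isDensity_one1 : IsDensity (1 : Mat 1) := by
  constructor
  · exact Matrix.PosSemidef.one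
  · simp [Matrix.trace]

/-- The "discard `B` and prepare `τ'`" channel. -/
def prep {a b b' : ℕ} (τ' : Mat b') (X : BMat a b) : BMat a b' := ptraceB X ⊗ₖ τ'

lemma trace_ptraceB {α β : Type} [Fintype α] [Fintype β] (M : Matrix (α × β) (α × β) ℂ) :
    (ptraceB M).trace = M.trace := by
  simp [Matrix.trace, ptraceB, Matrix.diag, Fintype.sum_prod_type]

lemma ptraceB_kron {a b : ℕ} (A : Mat a) (B : Mat b) : ptraceB (A ⊗ₖ B) = B.trace • A := by
  ext i i'
  simp [ptraceB, Matrix.trace, Matrix.diag, Finset.sum_mul, Finset.mul_sum, mul_comm]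

lemma ptraceA_kron {a b : ℕ} (A : Mat a) (B : Mat b) : ptraceA (A ⊗ₖ B) = A.trace • B := by
  ext j j'
  simp [ptraceA, Matrix.trace, Matrix.diag, Finset.sum_mul, Finset.mul_sum, mul_comm]

lemma trace_lTensorId {a b : ℕ} (M : Mat a → Mat a) (hM : ∀ X, (M X).trace = X.trace)
    (X : BMat a b) : (lTensorId M X).trace = X.trace := by
  have h1 : (lTensorId M X).trace = ∑ j, (M (fun k k' => X (k, j) (k', j))).trace := by
    simp only [Matrix.trace, lTensorId, Matrix.diag, Fintype.sum_prod_type]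
    rw [Finset.sum_comm]
  rw [h1]
  refine (Finset.sum_congr rfl fun j _ => hM _).trans ?_
  simp only [Matrix.trace, Matrix.diag, Fintype.sum_prod_type]
  rw [Finset.sum_comm]

lemma prep_kron {a b b' : ℕ} (τ' : Mat b') (ω : Mat a) (τ : Mat b) (hτ : τ.trace = 1) :
    prep τ' (ω ⊗ₖ τ) = ω ⊗ₖ τ' := by
  rw [prep, ptraceB_kron, hτ, one_smul]

lemma choi_prep {a b b' : ℕ} (τ' : Mat b') (hτ' : τ'.PosSemidef) :
    (choi (prep (a := a) (b := b) τ')).PosSemidef := by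
  obtain ⟨B, hB⟩ := psd_eq_ct_mul_self hτ'
  set C : Matrix (Fin b' × Fin b) ((Fin a × Fin b) × (Fin a × Fin b')) ℂ :=
    Matrix.of fun r q => (if q.1.1 = q.2.1 ∧ q.1.2 = r.2 then 1 else 0) * B r.1 q.2.2 with hC
  have key : choi (prep (a := a) (b := b) τ') = Cᴴ * C := by
    ext ⟨⟨i, j⟩, ⟨m, n⟩⟩ ⟨⟨k, l⟩, ⟨m', n'⟩⟩
    simp only [choi, prep, ptraceB, Matrix.kroneckerMap_apply, Matrix.mul_apply,
      Matrix.conjTranspose_apply, hC, Matrix.single, Matrix.of_apply,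
      Prod.mk.injEq, hB, Fintype.sum_prod_type, star_mul']
    simp only [apply_ite (star : ℂ → ℂ), star_one, star_zero]
    rw [Finset.sum_comm, Finset.sum_mul]
    refine Finset.sum_congr rfl fun x1 _ => ?_
    rw [Finset.mul_sum]
    refine Finset.sum_congr rfl fun x _ => ?_
    split_ifs <;> simp_all
  rw [key]
  exact Matrix.posSemidef_conjTranspose_mul_self C

lemma prep_cusc {a b b' : ℕ} (τ' : Mat b') (hτ' : IsDensity τ') :
    CUSC (prep (a := a) (b := b) τ') := by
  refine ⟨⟨?_, ?_, choi_prep τ' hτ'.1⟩, ?_, ?_⟩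
  · constructor
    · intro X Y
      ext p q
      simp [prep, ptraceB, Matrix.kroneckerMap_apply, add_mul, Finset.sum_add_distrib]
    · intro c X
      ext p q
      simp [prep, ptraceB, Matrix.kroneckerMap_apply, Finset.mul_sum, Finset.sum_mul, mul_assoc]
  · intro X
    rw [prep, Matrix.trace_kronecker, trace_ptraceB, hτ'.2, mul_one]
  · intro ρ hρ
    refine ⟨τ', hτ', ?_⟩
    rw [prep_kron τ' _ _ hρ.2]
  · intro M hM X
    rw [prep, prep, ptraceA_kron, ptraceA_kron, trace_ptraceB, trace_ptraceB,
      trace_lTensorId M hM.2.1 X]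

lemma lTensorId_id {a b : ℕ} (X : BMat a b) :
    lTensorId (isomChannel (1 : Matrix (Fin a) (Fin a) ℂ)) X = X := by
  ext p q
  simp [lTensorId, isomChannel]
  change ((1 : Mat a) * Matrix.of (fun k k' => X (k, p.2) (k', q.2))) p.1 q.1 = X p q
  simp

lemma condMajor_prod {dA dB dB' : ℕ} (ω : Mat dA) (τ : Mat dB) (τ' : Mat dB')
    (hτ : IsDensity τ) (hτ' : IsDensity τ') :
    CondMajor (ω ⊗ₖ τ') (ω ⊗ₖ τ) := by
  left
  refine ⟨le_refl _, 1, by simp, prep τ', prep_cusc τ' hτ', ?_⟩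
  rw [prep_kron τ' _ _ hτ.2, lTensorId_id]

lemma condEntropy_prod_eq (E : CondEntropy) {dA dB dB' : ℕ}
    (ω : Mat dA) (τ : Mat dB) (τ' : Mat dB')
    (hω : IsDensity ω) (hτ : IsDensity τ) (hτ' : IsDensity τ') :
    E.H (ω ⊗ₖ τ) = E.H (ω ⊗ₖ τ') :=
  le_antisymm
    (E.mono _ _ (hω.kron hτ) (hω.kron hτ') (condMajor_prod ω τ τ' hτ hτ'))
    (E.mono _ _ (hω.kron hτ') (hω.kron hτ) (condMajor_prod ω τ' τ hτ' hτ))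

end Aux

/-- conditional entropy reduces to an entropy on product states. -/
theorem condEntropy_product_state (E : CondEntropy) {dA dB dB' : ℕ}
    (ω : Mat dA) (τ : Mat dB) (τ' : Mat dB')
    (hω : IsDensity ω) (hτ : IsDensity τ) (hτ' : IsDensity τ') :
    E.H (ω ⊗ₖ τ) = E.H (ω ⊗ₖ τ') ∧ E.H (ω ⊗ₖ τ) = E.H (ω ⊗ₖ (1 : Mat 1)) := by
  exact ⟨condEntropy_prod_eq E ω τ τ' hω hτ hτ',
    condEntropy_prod_eq E ω τ 1 hω hτ isDensity_one1⟩

end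
end

section
/- Let H be any conditional entropy, and let ρ be a bipartite density matrix on ℂ^d ⊗ ℂ^d (dA = dB = d) such that every eigenvalue of ρ is at most 1/d and the marginal on B is maximally mixed, Tr_A[ρ] = u_B. Then H(A|B)_ρ ≥ 0. -/
open Matrix Kronecker
open scoped ComplexOrder

noncomputable section

open scoped Classical

/-! ### Auxiliary lemmas for Statement 6 -/

section S6Aux

open Matrix

/-- Trace is preserved by `lTensorId` of a trace-preserving map. -/
lemma s6_trace_lTensorId {a a' b : ℕ} (M : Mat a → Mat a')
    (hM : ∀ X, (M X).trace = X.trace) (X : BMat a b) :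
    (lTensorId M X).trace = X.trace := by
  have h : ∀ j : Fin b, (∑ i, M (fun k k' => X (k, j) (k', j)) i i) = ∑ i, X (i, j) (i, j) := by
    intro j
    simpa only [Matrix.trace, Matrix.diag] using hM (fun k k' => X (k, j) (k', j))
  calc (lTensorId M X).trace
      = ∑ i : Fin a', ∑ j : Fin b, M (fun k k' => X (k, j) (k', j)) i i := by
        simp only [Matrix.trace, Matrix.diag, lTensorId]
        exact Fintype.sum_prod_type (f := fun p : Fin a' × Fin b =>
          M (fun k k' => X (k, p.2) (k', p.2)) p.1 p.1)
    _ = ∑ j : Fin b, ∑ i : Fin a', M (fun k k' => X (k, j) (k', j)) i i := Finset.sum_comm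
    _ = ∑ j : Fin b, ∑ i : Fin a, X (i, j) (i, j) := Finset.sum_congr rfl fun j _ => h j
    _ = ∑ i : Fin a, ∑ j : Fin b, X (i, j) (i, j) := Finset.sum_comm
    _ = X.trace := by
        simp only [Matrix.trace, Matrix.diag]
        exact (Fintype.sum_prod_type (f := fun p : Fin a × Fin b => X p p)).symm

/-- Partial trace over `A` is preserved by `lTensorId` of a trace-preserving map. -/
lemma s6_ptraceA_lTensorId {a a' b : ℕ} (M : Mat a → Mat a')
    (hM : ∀ X, (M X).trace = X.trace) (X : BMat a b) :
    ptraceA (lTensorId M X) = ptraceA X := by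
  funext j j'
  have := hM (fun k k' => X (k, j) (k', j'))
  simpa only [Matrix.trace, Matrix.diag, ptraceA, lTensorId] using this

/-- A nonnegative combination of rank-one projectors is positive semidefinite. -/
lemma s6_psd_outer {n ι : Type} [Fintype n] [Fintype ι] (c : ι → ℝ) (hc : ∀ i, 0 ≤ c i)
    (v : ι → n → ℂ) (M : Matrix n n ℂ)
    (hM : ∀ p q, M p q = ∑ i, (c i : ℂ) * (v i p * star (v i q))) :
    M.PosSemidef := by
  have key : M = (Matrix.of fun (i : ι) (p : n) =>
      ((Real.sqrt (c i) : ℝ) : ℂ) * star (v i p))ᴴ *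
      (Matrix.of fun (i : ι) (p : n) => ((Real.sqrt (c i) : ℝ) : ℂ) * star (v i p)) := by
    ext p q
    rw [hM, Matrix.mul_apply]
    refine Finset.sum_congr rfl fun i _ => ?_
    rw [Matrix.conjTranspose_apply, Matrix.of_apply, Matrix.of_apply, star_mul', star_star,
      Complex.star_def, Complex.conj_ofReal]
    have h1 : ((Real.sqrt (c i) : ℝ) : ℂ) * ((Real.sqrt (c i) : ℝ) : ℂ) = (c i : ℂ) := by
      rw [← Complex.ofReal_mul, Real.mul_self_sqrt (hc i)]
    rw [← h1]; ring
  rw [key]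
  exact Matrix.posSemidef_conjTranspose_mul_self _

/-- Scaling a PSD matrix by a nonnegative real is PSD. -/
lemma s6_psd_smul {n : Type} [Fintype n] [DecidableEq n] {M : Matrix n n ℂ}
    (hM : M.PosSemidef) {c : ℝ} (hc : 0 ≤ c) : ((c : ℂ) • M).PosSemidef := by
  have h := hM.mul_mul_conjTranspose_same (((Real.sqrt c : ℝ) : ℂ) • (1 : Matrix n n ℂ))
  have e1 : (((Real.sqrt c : ℝ) : ℂ) • (1 : Matrix n n ℂ)) * M *
      ((((Real.sqrt c : ℝ) : ℂ) • (1 : Matrix n n ℂ)))ᴴ = (c : ℂ) • M := by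
    rw [Matrix.conjTranspose_smul, Matrix.conjTranspose_one, Matrix.smul_mul, Matrix.one_mul,
      Matrix.mul_smul, Matrix.mul_one, smul_smul, Complex.star_def, Complex.conj_ofReal,
      ← Complex.ofReal_mul, Real.mul_self_sqrt hc]
  rwa [e1] at h

/-- A block-diagonal matrix with PSD blocks is PSD. -/
lemma s6_psd_block {m n : Type} [Fintype m] [Fintype n] [DecidableEq m]
    (ω : m → Matrix n n ℂ) (hω : ∀ p, (ω p).PosSemidef)
    (M : Matrix (m × n) (m × n) ℂ)
    (hM : ∀ p q, M p q = if p.1 = q.1 then ω p.1 p.2 q.2 else 0) : M.PosSemidef := by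
  refine Matrix.PosSemidef.of_dotProduct_mulVec_nonneg ?_ ?_
  · ext p q
    rw [Matrix.conjTranspose_apply, hM, hM]
    by_cases h : p.1 = q.1
    · rw [if_pos h.symm, if_pos h, ← h]
      exact (hω p.1).1.apply p.2 q.2
    · rw [if_neg (fun hh => h hh.symm), if_neg h, star_zero]
  · intro x
    have key : dotProduct (star x) (M *ᵥ x)
        = ∑ p : m, dotProduct (star fun r => x (p, r)) (ω p *ᵥ fun r => x (p, r)) := by
      simp only [dotProduct, Matrix.mulVec, Pi.star_apply]
      rw [Fintype.sum_prod_type]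
      refine Finset.sum_congr rfl fun p _ => Finset.sum_congr rfl fun r _ => ?_
      congr 1
      rw [Fintype.sum_prod_type, Finset.sum_eq_single p]
      · refine Finset.sum_congr rfl fun s _ => ?_
        rw [hM]; simp
      · intro q _ hq
        refine Finset.sum_eq_zero fun s _ => ?_
        rw [hM]; simp [Ne.symm hq]
      · intro h; exact absurd (Finset.mem_univ p) h
    rw [key]
    exact Finset.sum_nonneg fun p _ => (hω p).dotProduct_mulVec_nonneg _

/-- Diagonal entries of a PSD matrix are nonnegative. -/
lemma s6_psd_diag_nonneg {n : Type} [Fintype n] [DecidableEq n] {M : Matrix n n ℂ}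
    (hM : M.PosSemidef) (p : n) : 0 ≤ M p p := by
  have h := hM.dotProduct_mulVec_nonneg (Pi.single p 1)
  simpa [dotProduct, Matrix.mulVec, Pi.single_apply, Finset.sum_ite_eq] using h

/-- If all eigenvalues of a Hermitian matrix are at most `c`, then `c•1 - ρ` is PSD. -/
lemma s6_psd_of_eig_le {ι : Type} [Fintype ι] [DecidableEq ι] {ρ : Matrix ι ι ℂ}
    (hρ : ρ.IsHermitian) {c : ℝ} (h : ∀ i, hρ.eigenvalues i ≤ c) :
    ((c : ℂ) • 1 - ρ).PosSemidef := by
  have hspec := hρ.spectral_theorem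
  rw [Unitary.conjStarAlgAut_apply] at hspec
  set U : Matrix ι ι ℂ := (hρ.eigenvectorUnitary : Matrix ι ι ℂ) with hUdef
  have hU : U * star U = 1 := (Matrix.mem_unitaryGroup_iff).mp hρ.eigenvectorUnitary.2
  have key : (c : ℂ) • (1 : Matrix ι ι ℂ) - ρ
      = U * Matrix.diagonal (fun i => ((c - hρ.eigenvalues i : ℝ) : ℂ)) * Uᴴ := by
    have h1 : (c : ℂ) • (1 : Matrix ι ι ℂ)
        = U * ((c : ℂ) • 1) * (star U) := by
      rw [Matrix.mul_smul, Matrix.mul_one, Matrix.smul_mul, hU]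
    have h2 : (c : ℂ) • (1 : Matrix ι ι ℂ) - Matrix.diagonal (RCLike.ofReal ∘ hρ.eigenvalues)
        = Matrix.diagonal (fun i => ((c - hρ.eigenvalues i : ℝ) : ℂ)) := by
      ext i j
      by_cases hij : i = j
      · subst hij
        simp only [Matrix.sub_apply, Matrix.smul_apply, Matrix.one_apply_eq,
          Matrix.diagonal_apply_eq, Function.comp_apply, Complex.ofReal_sub, smul_eq_mul, mul_one]
        rfl
      · simp [Matrix.one_apply, Matrix.diagonal_apply, hij]
    rw [← Matrix.star_eq_conjTranspose, ← h2, Matrix.mul_sub, Matrix.sub_mul, ← h1, ← hspec]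
  rw [key]
  refine Matrix.PosSemidef.mul_mul_conjTranspose_same ?_ U
  refine Matrix.posSemidef_diagonal_iff.mpr fun i => ?_
  rw [Complex.zero_le_real]
  linarith [h i]

/-- Entry formula for `uMat`. -/
lemma s6_uMat_apply {n : ℕ} (i j : Fin n) :
    uMat n i j = if i = j then (n : ℂ)⁻¹ else 0 := by
  simp [uMat, Matrix.smul_apply, Matrix.one_apply, mul_comm]

/-- `lTensorId` of conjugation by the identity is the identity. -/
lemma s6_lTensorId_one {a b : ℕ} (X : BMat a b) :
    lTensorId (isomChannel (1 : Mat a)) X = X := by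
  funext p q
  simp [lTensorId, isomChannel, Matrix.conjTranspose_one]
  exact congrFun (congrFun (Matrix.one_mul (fun k k' => X (k, p.2) (k', q.2) : Mat a)) p.1) q.1

end S6Aux

section S6States

open Matrix

/-- PSD for diagonal-type matrices. -/
lemma s6_psd_diagonal {n : Type} [Fintype n] [DecidableEq n] (f : n → ℂ)
    (hf : ∀ i, 0 ≤ f i) (M : Matrix n n ℂ)
    (hM : ∀ p q, M p q = if p = q then f p else 0) : M.PosSemidef := by
  have h : M = Matrix.diagonal f := by
    ext p q; rw [hM]; simp [Matrix.diagonal_apply]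
  rw [h]
  exact Matrix.posSemidef_diagonal_iff.mpr hf

lemma s6_inv_nat_nonneg (n : ℕ) : 0 ≤ ((n : ℂ))⁻¹ := by
  rw [← Complex.ofReal_natCast, ← Complex.ofReal_inv]
  exact Complex.zero_le_real.mpr (by positivity)

lemma s6_sum_indicator {α : Type} [Fintype α] [DecidableEq α] (c : ℝ) (x y : α) :
    (∑ i : α, (c : ℂ) * ((if x = i then 1 else 0) * star (if y = i then (1:ℂ) else 0)))
      = if x = y then (c : ℂ) else 0 := by
  rw [Finset.sum_eq_single x]
  · by_cases h : x = y <;> simp [h, eq_comm]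
  · intro i _ hix
    rw [if_neg (fun h => hix h.symm), zero_mul, mul_zero]
  · intro h; exact absurd (Finset.mem_univ x) h

lemma s6_density_one : IsDensity (1 : BMat 1 1) :=
  ⟨Matrix.PosSemidef.one, by simp [Matrix.trace_one]⟩

lemma s6_prod_one : prodState (1 : BMat 1 1) (1 : BMat 1 1) = (1 : BMat 1 1) := by
  funext p q
  have hpq : p = q := Subsingleton.elim (α := Fin 1 × Fin 1) p q
  subst hpq
  simp [prodState, Matrix.one_apply]

lemma s6_H_one (E : CondEntropy) : E.H (1 : BMat 1 1) = 0 := by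
  have h := E.additive (1 : BMat 1 1) (1 : BMat 1 1) s6_density_one s6_density_one
  rw [s6_prod_one] at h
  have h' : E.H (1 : BMat 1 1) = E.H (1 : BMat 1 1) + E.H (1 : BMat 1 1) := h
  linarith

lemma s6_density_uMat (n : ℕ) (hn : n ≠ 0) : IsDensity (uMat n) := by
  constructor
  · exact s6_psd_diagonal (fun _ => ((n:ℂ))⁻¹) (fun _ => s6_inv_nat_nonneg n) _
      (fun p q => s6_uMat_apply p q)
  · simp only [uMat, Matrix.trace_smul, Matrix.trace_one, smul_eq_mul, Fintype.card_fin]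
    rw [inv_mul_cancel₀ (Nat.cast_ne_zero.mpr hn)]

/-- The state `|0⟩⟨0| ⊗ u`. -/
def psiSt (e : ℕ) : BMat (e+1) (e+1) :=
  Matrix.of fun p q => if p.1 = 0 ∧ q.1 = 0 ∧ p.2 = q.2 then (((e+1 : ℕ)) : ℂ)⁻¹ else 0

/-- The classically maximally correlated state. -/
def chiSt (e : ℕ) : BMat (e+1) (e+1) :=
  Matrix.of fun p q => if p.1 = p.2 ∧ p = q then (((e+1 : ℕ)) : ℂ)⁻¹ else 0

lemma s6_psi_diag (e : ℕ) (p q : Fin (e+1) × Fin (e+1)) :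
    psiSt e p q = if p = q then (if p.1 = 0 then (((e+1:ℕ)):ℂ)⁻¹ else 0) else 0 := by
  simp only [psiSt, Matrix.of_apply]
  by_cases h1 : p = q
  · subst h1
    by_cases h2 : p.1 = 0 <;> simp [h2]
  · rw [if_neg h1, if_neg]
    rintro ⟨hp, hq, hpq⟩
    exact h1 (Prod.ext (hp.trans hq.symm) hpq)

lemma s6_chi_diag (e : ℕ) (p q : Fin (e+1) × Fin (e+1)) :
    chiSt e p q = if p = q then (if p.1 = p.2 then (((e+1:ℕ)):ℂ)⁻¹ else 0) else 0 := by
  simp only [chiSt, Matrix.of_apply]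
  by_cases h1 : p = q
  · subst h1
    by_cases h2 : p.1 = p.2 <;> simp [h2]
  · simp [h1]

lemma s6_density_psi (e : ℕ) : IsDensity (psiSt e) := by
  constructor
  · refine s6_psd_diagonal _ (fun i => ?_) _ (s6_psi_diag e)
    by_cases h : i.1 = 0 <;> simp only [h, if_true, if_false, le_refl]
    exact s6_inv_nat_nonneg (e+1)
  · have hne : (((e+1:ℕ)):ℂ) ≠ 0 := Nat.cast_ne_zero.mpr (Nat.succ_ne_zero e)
    calc (psiSt e).trace
        = ∑ p : Fin (e+1) × Fin (e+1), (if p.1 = 0 then (((e+1:ℕ)):ℂ)⁻¹ else 0) := by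
          refine Finset.sum_congr rfl fun p _ => ?_
          show psiSt e p p = _
          rw [s6_psi_diag, if_pos rfl]
      _ = ∑ a : Fin (e+1), ∑ _j : Fin (e+1), (if a = 0 then (((e+1:ℕ)):ℂ)⁻¹ else 0) :=
          Fintype.sum_prod_type
            (f := fun p : Fin (e+1) × Fin (e+1) => if p.1 = 0 then (((e+1:ℕ)):ℂ)⁻¹ else 0)
      _ = ∑ a : Fin (e+1), (if a = 0 then ((e+1:ℕ) : ℂ) * (((e+1:ℕ)):ℂ)⁻¹ else 0) := by
          refine Finset.sum_congr rfl fun a _ => ?_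
          rw [Finset.sum_const, Finset.card_univ, Fintype.card_fin, nsmul_eq_mul, mul_ite, mul_zero]
      _ = 1 := by
          rw [Finset.sum_ite_eq' Finset.univ (0 : Fin (e+1))]
          simp only [Finset.mem_univ, if_true]
          exact mul_inv_cancel₀ hne
  
lemma s6_density_chi (e : ℕ) : IsDensity (chiSt e) := by
  constructor
  · refine s6_psd_diagonal _ (fun i => ?_) _ (s6_chi_diag e)
    by_cases h : i.1 = i.2 <;> simp only [h, if_true, if_false, le_refl]
    exact s6_inv_nat_nonneg (e+1)
  · have hne : (((e+1:ℕ)):ℂ) ≠ 0 := Nat.cast_ne_zero.mpr (Nat.succ_ne_zero e)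
    calc (chiSt e).trace
        = ∑ p : Fin (e+1) × Fin (e+1), (if p.1 = p.2 then (((e+1:ℕ)):ℂ)⁻¹ else 0) := by
          refine Finset.sum_congr rfl fun p _ => ?_
          show chiSt e p p = _
          rw [s6_chi_diag, if_pos rfl]
      _ = ∑ a : Fin (e+1), ∑ j : Fin (e+1), (if a = j then (((e+1:ℕ)):ℂ)⁻¹ else 0) :=
          Fintype.sum_prod_type
            (f := fun p : Fin (e+1) × Fin (e+1) => if p.1 = p.2 then (((e+1:ℕ)):ℂ)⁻¹ else 0)
      _ = ∑ _a : Fin (e+1), (((e+1:ℕ)):ℂ)⁻¹ := by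
          refine Finset.sum_congr rfl fun a _ => ?_
          rw [Finset.sum_ite_eq Finset.univ a]
          simp
      _ = 1 := by
          rw [Finset.sum_const, Finset.card_univ, Fintype.card_fin, nsmul_eq_mul,
            mul_inv_cancel₀ hne]

end S6States

section S6Chan0

open Matrix

/-- The constant output of the preparation channel. -/
def s6_C0 (e : ℕ) : BMat 1 (e+1) :=
  Matrix.of fun p q => if p.2 = q.2 then (((e+1:ℕ)):ℂ)⁻¹ else 0

/-- The preparation channel `X ↦ Tr[X] • (u₁ ⊗ u)`. -/
def s6_chan0 (e : ℕ) : BMat 1 1 → BMat 1 (e+1) := fun X => X.trace • s6_C0 e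

lemma s6_trace_C0 (e : ℕ) : (s6_C0 e).trace = 1 := by
  have hne : (((e+1:ℕ)):ℂ) ≠ 0 := Nat.cast_ne_zero.mpr (Nat.succ_ne_zero e)
  calc (s6_C0 e).trace
      = ∑ p : Fin 1 × Fin (e+1), (((e+1:ℕ)):ℂ)⁻¹ := by
        refine Finset.sum_congr rfl fun p _ => ?_
        show s6_C0 e p p = _
        simp [s6_C0]
    _ = 1 := by
        rw [Finset.sum_const, Finset.card_univ, nsmul_eq_mul]
        simp only [Fintype.card_prod, Fintype.card_fin, one_mul]
        exact mul_inv_cancel₀ hne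

lemma s6_trace_std (p q : Fin 1 × Fin 1) :
    (Matrix.single p q (1:ℂ)).trace = 1 := by
  have hpq : p = q := Subsingleton.elim (α := Fin 1 × Fin 1) p q
  subst hpq
  have hp : p = ((0:Fin 1), (0:Fin 1)) := Subsingleton.elim (α := Fin 1 × Fin 1) _ _
  subst hp
  simp [Matrix.trace, Matrix.diag, Matrix.single]

lemma s6_chan0_cptp (e : ℕ) : IsCPTP (s6_chan0 e) := by
  refine ⟨⟨fun X Y => ?_, fun cc X => ?_⟩, fun X => ?_, ?_⟩
  · simp [s6_chan0, Matrix.trace_add, add_smul]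
  · simp [s6_chan0, Matrix.trace_smul, smul_smul]
  · simp [s6_chan0, Matrix.trace_smul, s6_trace_C0, smul_eq_mul]
  · refine s6_psd_outer (fun _ : Fin (e+1) => (((e+1:ℕ)):ℝ)⁻¹) (fun _ => by positivity)
      (fun j α => if α.2.2 = j then 1 else 0) _ fun α β => ?_
    rw [s6_sum_indicator (((e+1:ℕ)):ℝ)⁻¹ α.2.2 β.2.2]
    show s6_chan0 e (Matrix.single α.1 β.1 1) α.2 β.2 = _
    simp only [s6_chan0, Matrix.smul_apply, s6_trace_std, one_smul, s6_C0, Matrix.of_apply]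
    push_cast
    rfl

lemma s6_chan0_cu (e : ℕ) : CondUnital (s6_chan0 e) := by
  intro ρb hρb
  refine ⟨uMat (e+1), s6_density_uMat (e+1) (Nat.succ_ne_zero e), ?_⟩
  have htr : (uMat 1 ⊗ₖ ρb).trace = 1 := by
    have : (uMat 1 ⊗ₖ ρb).trace = ∑ p : Fin 1 × Fin 1, uMat 1 p.1 p.1 * ρb p.2 p.2 := by
      refine Finset.sum_congr rfl fun p _ => ?_
      rw [Matrix.diag_apply, Matrix.kroneckerMap_apply]
    rw [this, Fintype.sum_prod_type, Fin.sum_univ_one]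
    have hu : uMat 1 (0:Fin 1) (0:Fin 1) = 1 := by
      rw [s6_uMat_apply]; simp
    simp only [hu, one_mul]
    exact hρb.2
  have h2 : uMat 1 ⊗ₖ uMat (e+1) = s6_C0 e := by
    funext p q
    rw [Matrix.kroneckerMap_apply, s6_uMat_apply, s6_uMat_apply]
    have h1 : p.1 = q.1 := Subsingleton.elim _ _
    simp only [h1, if_true, Nat.cast_one, inv_one, one_mul, s6_C0, Matrix.of_apply]
  rw [h2]
  show (uMat 1 ⊗ₖ ρb).trace • s6_C0 e = s6_C0 e
  rw [htr, one_smul]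

lemma s6_chan0_sc (e : ℕ) : SemiCausal (s6_chan0 e) := by
  intro M hM X
  have h := s6_trace_lTensorId M hM.2.1 X
  show ptraceA ((lTensorId M X).trace • s6_C0 e) = ptraceA (X.trace • s6_C0 e)
  rw [h]

/-- Isometry embedding `ℂ → ℂ^{e+1}`. -/
def s6_V0 (e : ℕ) : Matrix (Fin (e+1)) (Fin 1) ℂ :=
  Matrix.of fun i _ => if i = 0 then 1 else 0

lemma s6_V0_isometry (e : ℕ) : (s6_V0 e)ᴴ * s6_V0 e = 1 := by
  funext i j
  have hij : i = j := Subsingleton.elim _ _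
  subst hij
  rw [Matrix.mul_apply, Matrix.one_apply_eq]
  have : ∀ k : Fin (e+1), (s6_V0 e)ᴴ i k * s6_V0 e k i
      = if k = 0 then 1 else 0 := by
    intro k
    rw [Matrix.conjTranspose_apply]
    simp only [s6_V0, Matrix.of_apply]
    by_cases hk : k = 0 <;> simp [hk]
  rw [Finset.sum_congr rfl fun k _ => this k]
  simp [Finset.sum_ite_eq']

lemma s6_condmajorA (e : ℕ) : CondMajor (psiSt e) (1 : BMat 1 1) := by
  left
  refine ⟨by omega, s6_V0 e, s6_V0_isometry e, s6_chan0 e,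
    ⟨s6_chan0_cptp e, s6_chan0_cu e, s6_chan0_sc e⟩, ?_⟩
  have h1 : s6_chan0 e (1 : BMat 1 1) = s6_C0 e := by
    show (1 : BMat 1 1).trace • s6_C0 e = s6_C0 e
    rw [Matrix.trace_one]
    simp
  rw [h1]
  funext p q
  set S : Mat 1 := fun k k' => s6_C0 e (k, p.2) (k', q.2) with hS
  show psiSt e p q = (s6_V0 e * S * (s6_V0 e)ᴴ) p.1 q.1
  rw [Matrix.mul_apply, Fin.sum_univ_one, Matrix.mul_apply, Fin.sum_univ_one,
    Matrix.conjTranspose_apply]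
  have hS00 : S 0 0 = if p.2 = q.2 then (((e+1:ℕ)):ℂ)⁻¹ else 0 := rfl
  rw [hS00]
  simp only [s6_V0, Matrix.of_apply, psiSt]
  by_cases h1 : p.1 = 0 <;> by_cases h2 : q.1 = 0 <;> by_cases h3 : p.2 = q.2 <;>
    simp [h1, h2, h3]

end S6Chan0

section S6Chan1

open Matrix

/-- The correlating channel: measure `B`, shift `A` by the outcome. -/
def s6_chan1 (e : ℕ) : BMat (e+1) (e+1) → BMat (e+1) (e+1) := fun Y =>
  Matrix.of fun p q => if p.2 = q.2 then Y (p.1 - p.2, p.2) (q.1 - p.2, q.2) else 0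

lemma s6_chan1_lin (e : ℕ) : IsLinearMap ℂ (s6_chan1 e) := by
  constructor
  · intro X Y; funext p q
    simp only [s6_chan1, Matrix.of_apply, Matrix.add_apply]
    split <;> simp
  · intro cc X; funext p q
    simp only [s6_chan1, Matrix.of_apply, Matrix.smul_apply]
    split <;> simp

lemma s6_chan1_tp (e : ℕ) (Y : BMat (e+1) (e+1)) : (s6_chan1 e Y).trace = Y.trace := by
  calc (s6_chan1 e Y).trace
      = ∑ p : Fin (e+1) × Fin (e+1), Y (p.1 - p.2, p.2) (p.1 - p.2, p.2) := by
        refine Finset.sum_congr rfl fun p _ => ?_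
        rw [Matrix.diag_apply]
        show (if p.2 = p.2 then Y (p.1 - p.2, p.2) (p.1 - p.2, p.2) else 0) = _
        rw [if_pos rfl]
    _ = ∑ a : Fin (e+1), ∑ j : Fin (e+1), Y (a - j, j) (a - j, j) :=
        Fintype.sum_prod_type
          (f := fun p : Fin (e+1) × Fin (e+1) => Y (p.1 - p.2, p.2) (p.1 - p.2, p.2))
    _ = ∑ j : Fin (e+1), ∑ a : Fin (e+1), Y (a - j, j) (a - j, j) := Finset.sum_comm
    _ = ∑ j : Fin (e+1), ∑ b : Fin (e+1), Y (b, j) (b, j) := by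
        refine Finset.sum_congr rfl fun j _ => ?_
        exact Fintype.sum_equiv (Equiv.subRight j) _ _ fun a => rfl
    _ = Y.trace := by
        show _ = ∑ p : Fin (e+1) × Fin (e+1), Y p p
        rw [Fintype.sum_prod_type (f := fun p : Fin (e+1) × Fin (e+1) => Y p p)]
        exact Finset.sum_comm

lemma s6_chan1_choi (e : ℕ) : (choi (s6_chan1 e)).PosSemidef := by
  refine s6_psd_outer (fun _ : Fin (e+1) => (1:ℝ)) (fun _ => zero_le_one)
    (fun i α => if α.2.2 = i ∧ α.1 = (α.2.1 - i, i) then 1 else 0) _ fun α β => ?_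
  show s6_chan1 e (Matrix.single α.1 β.1 1) α.2 β.2 = _
  simp only [Complex.ofReal_one, one_mul, s6_chan1, Matrix.of_apply]
  by_cases h : α.2.2 = β.2.2
  · rw [if_pos h, ← h]
    symm
    rw [Finset.sum_eq_single α.2.2
      (fun i _ hi => by rw [if_neg (fun hc => hi hc.1.symm), zero_mul])
      (fun hc => absurd (Finset.mem_univ _) hc)]
    simp only [Matrix.single, Matrix.of_apply, true_and, if_pos rfl]
    by_cases h1 : α.1 = (α.2.1 - α.2.2, α.2.2) <;>
      by_cases h2 : β.1 = (β.2.1 - α.2.2, α.2.2) <;> simp [h1, h2]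
  · rw [if_neg h]
    refine (Finset.sum_eq_zero fun i _ => ?_).symm
    by_cases hi : α.2.2 = i
    · have hz : (if β.2.2 = i ∧ β.1 = (β.2.1 - i, i) then (1:ℂ) else 0) = 0 :=
        if_neg (fun hc => h (hi.trans hc.1.symm))
      rw [hz, star_zero, mul_zero]
    · rw [if_neg (fun hc => hi hc.1), zero_mul]

lemma s6_ptraceA_chan1 (e : ℕ) (Y : BMat (e+1) (e+1)) :
    ptraceA (s6_chan1 e Y) = Matrix.of fun j j' =>
      if j = j' then ptraceA Y j j else 0 := by
  funext j j'
  show (∑ a, s6_chan1 e Y (a, j) (a, j')) = _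
  by_cases h : j = j'
  · subst h
    simp only [Matrix.of_apply, if_pos rfl]
    calc (∑ a, s6_chan1 e Y (a, j) (a, j))
        = ∑ a, Y (a - j, j) (a - j, j) := by
          refine Finset.sum_congr rfl fun a _ => ?_
          show (if j = j then _ else 0) = _
          rw [if_pos rfl]
      _ = ∑ b, Y (b, j) (b, j) := Fintype.sum_equiv (Equiv.subRight j) _ _ fun a => rfl
      _ = ptraceA Y j j := rfl
  · simp only [Matrix.of_apply, if_neg h]
    refine Finset.sum_eq_zero fun a _ => ?_
    show (if j = j' then _ else 0) = 0
    rw [if_neg h]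

lemma s6_chan1_sc (e : ℕ) : SemiCausal (s6_chan1 e) := by
  intro M hM X
  rw [s6_ptraceA_chan1, s6_ptraceA_chan1, s6_ptraceA_lTensorId M hM.2.1]

lemma s6_chan1_cu (e : ℕ) : CondUnital (s6_chan1 e) := by
  intro ρb hρb
  refine ⟨Matrix.of fun j j' => if j = j' then ρb j j else 0, ⟨?_, ?_⟩, ?_⟩
  · exact s6_psd_diagonal (fun j => ρb j j) (fun j => s6_psd_diag_nonneg hρb.1 j) _
      (fun p q => rfl)
  · calc (Matrix.of fun j j' => if j = j' then ρb j j else 0 : Mat (e+1)).trace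
        = ∑ j, ρb j j := by
          refine Finset.sum_congr rfl fun j _ => ?_
          show (if j = j then ρb j j else 0) = _
          rw [if_pos rfl]
      _ = 1 := hρb.2
  · funext p q
    show (if p.2 = q.2 then (uMat (e+1) ⊗ₖ ρb) (p.1 - p.2, p.2) (q.1 - p.2, q.2) else 0)
        = uMat (e+1) p.1 q.1 * (if p.2 = q.2 then ρb p.2 p.2 else 0)
    by_cases h3 : p.2 = q.2
    · rw [if_pos h3, if_pos h3, Matrix.kroneckerMap_apply, s6_uMat_apply, s6_uMat_apply]
      simp only [sub_left_inj]
      have hb : ρb p.2 q.2 = ρb p.2 p.2 := by rw [← h3]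
      rw [hb]
    · rw [if_neg h3, if_neg h3, mul_zero]

lemma s6_chan1_psi (e : ℕ) : s6_chan1 e (psiSt e) = chiSt e := by
  funext p q
  show (if p.2 = q.2 then psiSt e (p.1 - p.2, p.2) (q.1 - p.2, q.2) else 0) = chiSt e p q
  by_cases h3 : p.2 = q.2
  · rw [if_pos h3]
    simp only [psiSt, chiSt, Matrix.of_apply, sub_eq_zero]
    have hiff : (p.1 = p.2 ∧ q.1 = p.2 ∧ p.2 = q.2) ↔ (p.1 = p.2 ∧ p = q) := by
      constructor
      · rintro ⟨h1, h2, hc⟩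
        exact ⟨h1, Prod.ext (h1.trans h2.symm) hc⟩
      · rintro ⟨h1, h2⟩
        refine ⟨h1, ?_, h3⟩
        rw [← h2]; exact h1
    rw [if_congr hiff rfl rfl]
  · rw [if_neg h3, chiSt]
    show (0:ℂ) = if p.1 = p.2 ∧ p = q then _ else 0
    rw [if_neg]
    · rintro ⟨h1, h2⟩
      exact h3 (congrArg Prod.snd h2)

lemma s6_condmajorB (e : ℕ) : CondMajor (chiSt e) (psiSt e) := by
  left
  refine ⟨le_refl _, 1, by simp, s6_chan1 e,
    ⟨⟨s6_chan1_lin e, s6_chan1_tp e, s6_chan1_choi e⟩, s6_chan1_cu e, s6_chan1_sc e⟩, ?_⟩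
  rw [s6_chan1_psi, s6_lTensorId_one]

end S6Chan1

section S6Chan2

open Matrix

/-- The complementary state `ξ = ((1/d)·1 - ρ)/(d-1)`. -/
def s6_xi (e : ℕ) (ρ : BMat (e+1) (e+1)) : BMat (e+1) (e+1) :=
  ((e:ℂ))⁻¹ • ((((e+1:ℕ)):ℂ)⁻¹ • 1 - ρ)

def s6_omega (e : ℕ) (ρ : BMat (e+1) (e+1)) (r : Fin (e+1) × Fin (e+1)) :
    BMat (e+1) (e+1) :=
  if r.1 = r.2 then ρ else s6_xi e ρ

/-- The measure-and-prepare channel realizing `χ ↦ ρ`. -/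
def s6_chan2 (e : ℕ) (ρ : BMat (e+1) (e+1)) :
    BMat (e+1) (e+1) → BMat (e+1) (e+1) := fun Y =>
  ∑ r : Fin (e+1) × Fin (e+1), Y r r • s6_omega e ρ r

lemma s6_xi_psd (e : ℕ) (ρ : BMat (e+1) (e+1)) (hρ : IsDensity ρ)
    (heig : ∀ i, hρ.1.1.eigenvalues i ≤ 1 / ((e+1:ℕ) : ℝ)) :
    (s6_xi e ρ).PosSemidef := by
  have hc : (((((e+1:ℕ):ℝ))⁻¹ : ℝ) : ℂ) = (((e+1:ℕ)):ℂ)⁻¹ := by push_cast; ring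
  have h2 := s6_psd_of_eig_le hρ.1.1 (c := (((e+1:ℕ):ℝ))⁻¹) (fun i => by
    rw [← one_div]; exact heig i)
  rw [hc] at h2
  have h3 := s6_psd_smul h2 (c := ((e:ℝ))⁻¹) (by positivity)
  have h4 : ((((e:ℝ))⁻¹ : ℝ) : ℂ) = ((e:ℂ))⁻¹ := by push_cast; ring
  rw [h4] at h3
  exact h3

lemma s6_xi_trace (e : ℕ) (ρ : BMat (e+1) (e+1)) (he : e ≠ 0) (htr : ρ.trace = 1) :
    (s6_xi e ρ).trace = 1 := by
  have he' : (e:ℂ) ≠ 0 := Nat.cast_ne_zero.mpr he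
  have hd : ((e:ℂ)+1) ≠ 0 := by
    have h := Nat.cast_ne_zero (R := ℂ).mpr (Nat.succ_ne_zero e)
    push_cast at h
    exact h
  rw [s6_xi, Matrix.trace_smul, Matrix.trace_sub, Matrix.trace_smul, Matrix.trace_one, htr]
  simp only [smul_eq_mul, Fintype.card_prod, Fintype.card_fin]
  push_cast
  field_simp
  ring

lemma s6_ptraceA_smul {a b : ℕ} (c : ℂ) (M : BMat a b) :
    ptraceA (c • M) = c • ptraceA M := by
  funext j j'
  show (∑ i, (c • M) (i,j) (i,j')) = c • ∑ i, M (i,j) (i,j')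
  simp [Matrix.smul_apply, Finset.mul_sum, smul_eq_mul]

lemma s6_ptraceA_sub {a b : ℕ} (M N : BMat a b) :
    ptraceA (M - N) = ptraceA M - ptraceA N := by
  funext j j'
  show (∑ i, (M - N) (i,j) (i,j')) = (∑ i, M (i,j) (i,j')) - ∑ i, N (i,j) (i,j')
  simp [Matrix.sub_apply, Finset.sum_sub_distrib]

lemma s6_ptraceA_sum {a b : ℕ} {ι : Type} [Fintype ι] (f : ι → BMat a b) :
    ptraceA (∑ i, f i) = ∑ i, ptraceA (f i) := by
  funext j j'
  show (∑ k, (∑ i, f i) (k,j) (k,j')) = (∑ i, ptraceA (f i)) j j'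
  simp only [Matrix.sum_apply, ptraceA]
  exact Finset.sum_comm

lemma s6_ptraceA_one (n : ℕ) : ptraceA (1 : BMat n n) = ((n:ℕ):ℂ) • (1 : Mat n) := by
  funext j j'
  show (∑ i, (1 : BMat n n) (i,j) (i,j')) = (((n:ℕ):ℂ) • (1:Mat n)) j j'
  by_cases h : j = j'
  · subst h
    simp [Matrix.one_apply, Prod.ext_iff, Finset.sum_const, Finset.card_univ]
  · simp [Matrix.one_apply, h, Prod.ext_iff]

lemma s6_ptraceA_xi (e : ℕ) (ρ : BMat (e+1) (e+1)) (he : e ≠ 0)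
    (hmarg : ptraceA ρ = uMat (e+1)) : ptraceA (s6_xi e ρ) = uMat (e+1) := by
  have he' : (e:ℂ) ≠ 0 := Nat.cast_ne_zero.mpr he
  have hd : (((e+1:ℕ)):ℂ) ≠ 0 := Nat.cast_ne_zero.mpr (Nat.succ_ne_zero e)
  rw [s6_xi, s6_ptraceA_smul, s6_ptraceA_sub, s6_ptraceA_smul, s6_ptraceA_one, hmarg, uMat,
    smul_smul, ← sub_smul, smul_smul]
  congr 1
  field_simp
  push_cast; ring

lemma s6_ptraceA_chan2 (e : ℕ) (ρ : BMat (e+1) (e+1)) (he : e ≠ 0)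
    (hmarg : ptraceA ρ = uMat (e+1)) (Y : BMat (e+1) (e+1)) :
    ptraceA (s6_chan2 e ρ Y) = Y.trace • uMat (e+1) := by
  have homega : ∀ r, ptraceA (s6_omega e ρ r) = uMat (e+1) := by
    intro r
    rw [s6_omega]
    split
    · exact hmarg
    · exact s6_ptraceA_xi e ρ he hmarg
  rw [s6_chan2, s6_ptraceA_sum]
  calc (∑ r : Fin (e+1) × Fin (e+1), ptraceA (Y r r • s6_omega e ρ r))
      = ∑ r : Fin (e+1) × Fin (e+1), Y r r • uMat (e+1) := by
        refine Finset.sum_congr rfl fun r _ => ?_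
        rw [s6_ptraceA_smul, homega r]
    _ = Y.trace • uMat (e+1) := by
        rw [← Finset.sum_smul]
        rfl

lemma s6_chan2_sc (e : ℕ) (ρ : BMat (e+1) (e+1)) (he : e ≠ 0)
    (hmarg : ptraceA ρ = uMat (e+1)) : SemiCausal (s6_chan2 e ρ) := by
  intro M hM X
  rw [s6_ptraceA_chan2 e ρ he hmarg, s6_ptraceA_chan2 e ρ he hmarg,
    s6_trace_lTensorId M hM.2.1]

lemma s6_chan2_lin (e : ℕ) (ρ : BMat (e+1) (e+1)) : IsLinearMap ℂ (s6_chan2 e ρ) := by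
  constructor
  · intro X Y
    rw [s6_chan2, s6_chan2, s6_chan2, ← Finset.sum_add_distrib]
    refine Finset.sum_congr rfl fun r _ => ?_
    rw [Matrix.add_apply, add_smul]
  · intro cc X
    rw [s6_chan2, s6_chan2, Finset.smul_sum]
    refine Finset.sum_congr rfl fun r _ => ?_
    rw [Matrix.smul_apply, smul_eq_mul, mul_smul]

lemma s6_chan2_tp (e : ℕ) (ρ : BMat (e+1) (e+1)) (he : e ≠ 0) (htr : ρ.trace = 1)
    (Y : BMat (e+1) (e+1)) : (s6_chan2 e ρ Y).trace = Y.trace := by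
  have homega : ∀ r, (s6_omega e ρ r).trace = 1 := by
    intro r
    rw [s6_omega]
    split
    · exact htr
    · exact s6_xi_trace e ρ he htr
  rw [s6_chan2, Matrix.trace_sum]
  calc (∑ r : Fin (e+1) × Fin (e+1), (Y r r • s6_omega e ρ r).trace)
      = ∑ r : Fin (e+1) × Fin (e+1), Y r r := by
        refine Finset.sum_congr rfl fun r _ => ?_
        rw [Matrix.trace_smul, homega r, smul_eq_mul, mul_one]
    _ = Y.trace := rfl

lemma s6_chan2_choi (e : ℕ) (ρ : BMat (e+1) (e+1)) (hρ : IsDensity ρ)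
    (heig : ∀ i, hρ.1.1.eigenvalues i ≤ 1 / ((e+1:ℕ) : ℝ)) :
    (choi (s6_chan2 e ρ)).PosSemidef := by
  refine s6_psd_block (s6_omega e ρ) (fun p => ?_) _ fun α β => ?_
  · rw [s6_omega]
    split
    · exact hρ.1
    · exact s6_xi_psd e ρ hρ heig
  · show s6_chan2 e ρ (Matrix.single α.1 β.1 1) α.2 β.2 = _
    rw [s6_chan2]
    simp only [Matrix.sum_apply, Matrix.smul_apply, smul_eq_mul]
    by_cases h : α.1 = β.1
    · rw [if_pos h]
      rw [Finset.sum_eq_single α.1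
        (fun r _ hr => by
          have hz : Matrix.single α.1 β.1 (1:ℂ) r r = 0 := by
            show (if α.1 = r ∧ β.1 = r then (1:ℂ) else 0) = 0
            exact if_neg (fun hc => hr hc.1.symm)
          rw [hz, zero_mul])
        (fun hc => absurd (Finset.mem_univ _) hc)]
      have ho : Matrix.single α.1 β.1 (1:ℂ) α.1 α.1 = 1 := by
        show (if α.1 = α.1 ∧ β.1 = α.1 then (1:ℂ) else 0) = 1
        exact if_pos ⟨rfl, h.symm⟩
      rw [ho, one_mul]
    · rw [if_neg h]
      refine Finset.sum_eq_zero fun r _ => ?_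
      have hz : Matrix.single α.1 β.1 (1:ℂ) r r = 0 := by
        show (if α.1 = r ∧ β.1 = r then (1:ℂ) else 0) = 0
        exact if_neg (fun hc => h (hc.1.trans hc.2.symm))
      rw [hz, zero_mul]

lemma s6_chan2_cu (e : ℕ) (ρ : BMat (e+1) (e+1)) (he : e ≠ 0) :
    CondUnital (s6_chan2 e ρ) := by
  intro ρb hρb
  refine ⟨uMat (e+1), s6_density_uMat (e+1) (Nat.succ_ne_zero e), ?_⟩
  have hxi : (e:ℂ) • s6_xi e ρ = (((e+1:ℕ)):ℂ)⁻¹ • 1 - ρ := by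
    rw [s6_xi, smul_smul, mul_inv_cancel₀ (Nat.cast_ne_zero.mpr he), one_smul]
  have hsum_a : ∀ i : Fin (e+1), (∑ a : Fin (e+1), s6_omega e ρ (a, i))
      = (((e+1:ℕ)):ℂ)⁻¹ • (1 : BMat (e+1) (e+1)) := by
    intro i
    have hterm : ∀ a : Fin (e+1), s6_omega e ρ (a, i)
        = s6_xi e ρ + (if a = i then ρ - s6_xi e ρ else 0) := by
      intro a
      rw [s6_omega]
      by_cases h : a = i
      · show (if a = i then ρ else s6_xi e ρ) = _
        rw [if_pos h, if_pos h]
        abel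
      · show (if a = i then ρ else s6_xi e ρ) = _
        rw [if_neg h, if_neg h, add_zero]
    rw [Finset.sum_congr rfl fun a _ => hterm a, Finset.sum_add_distrib, Finset.sum_const,
      Finset.card_univ, Fintype.card_fin, Finset.sum_ite_eq' Finset.univ i]
    simp only [Finset.mem_univ, if_true]
    rw [← Nat.cast_smul_eq_nsmul ℂ (e+1) (s6_xi e ρ)]
    have hsplit : ((e+1:ℕ):ℂ) • s6_xi e ρ = (e:ℂ) • s6_xi e ρ + s6_xi e ρ := by
      have hc2 : ((e+1:ℕ):ℂ) = (e:ℂ) + 1 := by push_cast; ring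
      rw [hc2, add_smul, one_smul]
    rw [hsplit, hxi]
    abel
  have hdiag : ∀ r : Fin (e+1) × Fin (e+1),
      (uMat (e+1) ⊗ₖ ρb) r r = (((e+1:ℕ)):ℂ)⁻¹ * ρb r.2 r.2 := by
    intro r
    rw [Matrix.kroneckerMap_apply, s6_uMat_apply, if_pos rfl]
  show s6_chan2 e ρ (uMat (e+1) ⊗ₖ ρb) = uMat (e+1) ⊗ₖ uMat (e+1)
  rw [s6_chan2]
  calc (∑ r : Fin (e+1) × Fin (e+1), (uMat (e+1) ⊗ₖ ρb) r r • s6_omega e ρ r)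
      = ∑ r : Fin (e+1) × Fin (e+1), ((((e+1:ℕ)):ℂ)⁻¹ * ρb r.2 r.2) • s6_omega e ρ r := by
        refine Finset.sum_congr rfl fun r _ => ?_
        rw [hdiag r]
    _ = ∑ i : Fin (e+1), ∑ a : Fin (e+1),
          ((((e+1:ℕ)):ℂ)⁻¹ * ρb i i) • s6_omega e ρ (a, i) := by
        rw [Fintype.sum_prod_type (f := fun r : Fin (e+1) × Fin (e+1) =>
          ((((e+1:ℕ)):ℂ)⁻¹ * ρb r.2 r.2) • s6_omega e ρ r)]
        exact Finset.sum_comm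
    _ = ∑ i : Fin (e+1), ((((e+1:ℕ)):ℂ)⁻¹ * ρb i i) •
          ((((e+1:ℕ)):ℂ)⁻¹ • (1 : BMat (e+1) (e+1))) := by
        refine Finset.sum_congr rfl fun i _ => ?_
        rw [← Finset.smul_sum, hsum_a i]
    _ = uMat (e+1) ⊗ₖ uMat (e+1) := by
        rw [← Finset.sum_smul, ← Finset.mul_sum]
        have htr : (∑ i, ρb i i) = 1 := hρb.2
        rw [htr, mul_one, smul_smul]
        funext p q
        rw [Matrix.kroneckerMap_apply, s6_uMat_apply, s6_uMat_apply, Matrix.smul_apply,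
          Matrix.one_apply]
        by_cases h : p = q
        · subst h
          simp
        · rw [if_neg h, smul_zero]
          by_cases h1 : p.1 = q.1
          · have h2 : ¬ p.2 = q.2 := fun hc => h (Prod.ext h1 hc)
            rw [if_neg h2, mul_zero]
          · rw [if_neg h1, zero_mul]

lemma s6_chan2_chi (e : ℕ) (ρ : BMat (e+1) (e+1)) : s6_chan2 e ρ (chiSt e) = ρ := by
  rw [s6_chan2]
  have hd : ∀ r : Fin (e+1) × Fin (e+1),
      chiSt e r r • s6_omega e ρ r
        = if r.1 = r.2 then (((e+1:ℕ)):ℂ)⁻¹ • ρ else 0 := by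
    intro r
    rw [s6_chi_diag, if_pos rfl, s6_omega]
    by_cases h : r.1 = r.2 <;> simp [h]
  rw [Finset.sum_congr rfl fun r _ => hd r]
  rw [Fintype.sum_prod_type (f := fun r : Fin (e+1) × Fin (e+1) =>
    if r.1 = r.2 then (((e+1:ℕ)):ℂ)⁻¹ • ρ else 0)]
  have hinner : ∀ a : Fin (e+1),
      (∑ i, if a = i then (((e+1:ℕ)):ℂ)⁻¹ • ρ else 0) = (((e+1:ℕ)):ℂ)⁻¹ • ρ := by
    intro a
    rw [Finset.sum_ite_eq Finset.univ a]
    simp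
  rw [Finset.sum_congr rfl fun a _ => hinner a, Finset.sum_const, Finset.card_univ,
    Fintype.card_fin, ← Nat.cast_smul_eq_nsmul ℂ, smul_smul,
    mul_inv_cancel₀ (Nat.cast_ne_zero.mpr (Nat.succ_ne_zero e)), one_smul]

lemma s6_condmajorC (e : ℕ) (he : e ≠ 0) (ρ : BMat (e+1) (e+1)) (hρ : IsDensity ρ)
    (heig : ∀ i, hρ.1.1.eigenvalues i ≤ 1 / ((e+1:ℕ) : ℝ))
    (hmarg : ptraceA ρ = uMat (e+1)) : CondMajor ρ (chiSt e) := by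
  left
  refine ⟨le_refl _, 1, by simp, s6_chan2 e ρ,
    ⟨⟨s6_chan2_lin e ρ, s6_chan2_tp e ρ he hρ.2, s6_chan2_choi e ρ hρ heig⟩,
      s6_chan2_cu e ρ he, s6_chan2_sc e ρ he hmarg⟩, ?_⟩
  rw [s6_chan2_chi e ρ, s6_lTensorId_one]

end S6Chan2

-- AUXMORE5

/-- nonnegativity of conditional entropy for states with small
eigenvalues and maximally mixed `B` marginal. -/
theorem condEntropy_nonneg_of_small_eigenvalues (E : CondEntropy) {d : ℕ}
    (ρ : BMat d d) (hρ : IsDensity ρ)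
    (heig : ∀ i, hρ.1.1.eigenvalues i ≤ 1 / (d : ℝ))
    (hmarg : ptraceA ρ = uMat d) :
    0 ≤ E.H ρ := by
  classical
  rcases Nat.eq_zero_or_pos d with h0 | hpos
  · subst h0
    exfalso
    have h := hρ.2
    simp [Matrix.trace] at h
  obtain ⟨e, rfl⟩ : ∃ e, d = e + 1 := ⟨d - 1, by omega⟩
  rcases Nat.eq_zero_or_pos e with he0 | hepos
  · subst he0
    have hρ1 : ρ = (1 : BMat 1 1) := by
      funext p q
      have hpq : p = q := Subsingleton.elim (α := Fin 1 × Fin 1) p q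
      subst hpq
      have hp : p = ((0 : Fin 1), (0 : Fin 1)) := Subsingleton.elim (α := Fin 1 × Fin 1) p _
      subst hp
      have h2 : (∑ r : Fin 1 × Fin 1, ρ r r) = 1 := hρ.2
      rw [Fintype.sum_prod_type (f := fun r : Fin 1 × Fin 1 => ρ r r), Fin.sum_univ_one,
        Fin.sum_univ_one] at h2
      rw [Matrix.one_apply_eq]
      exact h2
    rw [hρ1, s6_H_one E]
  · have he : e ≠ 0 := Nat.pos_iff_ne_zero.mp hepos
    have h0 := s6_H_one E
    have hA := E.mono (1 : BMat 1 1) (psiSt e) s6_density_one (s6_density_psi e)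
      (s6_condmajorA e)
    have hB := E.mono (psiSt e) (chiSt e) (s6_density_psi e) (s6_density_chi e)
      (s6_condmajorB e)
    have hC := E.mono (chiSt e) ρ (s6_density_chi e) hρ
      (s6_condmajorC e he ρ hρ heig hmarg)
    linarith

end
end

section
/- Every conditionally doubly stochastic channel is conditionally unital and semi-causal. That is, if M : XY → XY' is a bipartite channel of the form M = Σ_j D^(j) ⊗ F^(j), where each D^(j) is the quantum channel on X induced by a doubly stochastic matrix (D^(j)(ρ) = Σ_{a,b} d^(j)_{a|b} ⟨b|ρ|b⟩ |a⟩⟨a| with (d^(j)_{a|b}) doubly stochastic) and each F^(j) : Y → Y' is a completely positive map such that Σ_j F^(j) is a quantum channel, then M ∈ CUSC(XY → XY'). -/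
open Matrix Kronecker
open scoped ComplexOrder

noncomputable section

open scoped Classical

section CDSHelpers

lemma trace_eq_sum {ι : Type} [Fintype ι] (A : Matrix ι ι ℂ) : A.trace = ∑ i, A i i := rfl

lemma psd_real_smul {ι : Type} [Fintype ι] {A : Matrix ι ι ℂ} (hA : A.PosSemidef)
    {r : ℝ} (hr : 0 ≤ r) : ((r : ℂ) • A).PosSemidef := by
  constructor
  · have h1 := hA.1
    unfold Matrix.IsHermitian at *
    rw [Matrix.conjTranspose_smul, h1]
    congr 1
    simp
  · intro v
    exact (hA.smul (show (0:ℂ) ≤ (r:ℂ) by exact_mod_cast hr)).2 v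

lemma psd_sum {ι κ : Type} [Fintype ι] (s : Finset κ)
    (f : κ → Matrix ι ι ℂ) (h : ∀ j ∈ s, (f j).PosSemidef) : (∑ j ∈ s, f j).PosSemidef :=
  Finset.sum_induction f _ (fun _ _ ha hb => ha.add hb) Matrix.PosSemidef.zero h

lemma apply_eq_choi {p q : ℕ} {Φ : Mat p → Mat q} (hlin : IsLinearMap ℂ Φ)
    (ρ : Mat p) (i i' : Fin q) :
    Φ ρ i i' = ∑ l, ∑ l', ρ l l' * choi Φ (l, i) (l', i') := by
  have key : Φ ρ = ∑ l, ∑ l', ρ l l' • Φ (Matrix.single l l' 1) := by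
    conv_lhs => rw [Matrix.matrix_eq_sum_single ρ]
    have h1 : ∀ l l', Matrix.single l l' (ρ l l') = ρ l l' • Matrix.single l l' (1:ℂ) := by
      intro l l'; rw [Matrix.smul_single, smul_eq_mul, mul_one]
    rw [show (∑ l, ∑ l', Matrix.single l l' (ρ l l')) = ∑ l, ∑ l', ρ l l' • Matrix.single l l' (1:ℂ) from
      Finset.sum_congr rfl fun l _ => Finset.sum_congr rfl fun l' _ => h1 l l']
    rw [show Φ (∑ l, ∑ l', ρ l l' • Matrix.single l l' (1:ℂ))
        = (IsLinearMap.mk' Φ hlin) (∑ l, ∑ l', ρ l l' • Matrix.single l l' (1:ℂ)) from rfl,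
      map_sum]
    refine Finset.sum_congr rfl fun l _ => ?_
    rw [map_sum]
    refine Finset.sum_congr rfl fun l' _ => ?_
    rw [LinearMap.map_smul]
    rfl
  rw [key]
  simp only [Matrix.sum_apply, Matrix.smul_apply, smul_eq_mul]
  rfl

lemma cp_preserves_psd {p q : ℕ} {Φ : Mat p → Mat q} (hlin : IsLinearMap ℂ Φ)
    (hchoi : (choi Φ).PosSemidef) {ρ : Mat p} (hρ : ρ.PosSemidef) :
    (Φ ρ).PosSemidef := by
  obtain ⟨B, hB⟩ : ∃ B : Mat p, ρ = Bᴴ * B := by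
    open scoped MatrixOrder in
    obtain ⟨B, hB⟩ := CStarAlgebra.nonneg_iff_eq_star_mul_self.mp hρ.nonneg
    exact ⟨B, hB⟩
  set E : Fin p → Matrix (Fin p × Fin q) (Fin q) ℂ :=
    fun t => fun r i => B t r.1 * (if r.2 = i then 1 else 0) with hE
  have key : Φ ρ = ∑ t, (E t)ᴴ * choi Φ * (E t) := by
    ext i i'
    rw [apply_eq_choi hlin]
    have hρent : ∀ l l', ρ l l' = ∑ t, (starRingEnd ℂ) (B t l) * B t l' := by
      intro l l'; rw [hB]; simp [Matrix.mul_apply, Matrix.conjTranspose_apply]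
    simp only [Matrix.sum_apply, Matrix.mul_apply, Matrix.conjTranspose_apply]
    simp only [Matrix.sum_apply, Matrix.mul_apply, Matrix.conjTranspose_apply, hE,
      Fintype.sum_prod_type, mul_ite, mul_one, mul_zero, ite_mul, zero_mul, one_mul,
      Finset.sum_ite_eq, Finset.sum_ite_eq', Finset.mem_univ, if_true, _root_.map_mul,
      hρent, Finset.mul_sum, Finset.sum_mul]
    simp only [Complex.star_def, apply_ite (⇑(starRingEnd ℂ)), map_zero, ite_mul, zero_mul,
      Finset.sum_ite_eq', Finset.mem_univ, if_true]
    have reorder : ∀ (f : Fin p → Fin p → Fin p → ℂ),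
        (∑ t, ∑ l', ∑ l, f t l' l) = ∑ l, ∑ l', ∑ t, f t l' l := by
      intro f
      conv_lhs => rw [Finset.sum_comm]
      rw [show (∑ l', ∑ t, ∑ l, f t l' l) = ∑ l', ∑ l, ∑ t, f t l' l from
        Finset.sum_congr rfl fun l' _ => Finset.sum_comm]
      exact Finset.sum_comm
    rw [reorder]
    exact Finset.sum_congr rfl fun l _ => Finset.sum_congr rfl fun l' _ =>
      Finset.sum_congr rfl fun t _ => by ring
  rw [key]
  refine psd_sum _ _ fun t _ => ?_
  simpa [Matrix.conjTranspose_conjTranspose] using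
    hchoi.mul_mul_conjTranspose_same (E t)ᴴ

lemma comm3 {A B C : Type} [Fintype A] [Fintype B] [Fintype C] (f : A → B → C → ℂ) :
    (∑ a, ∑ b, ∑ c, f a b c) = ∑ b, ∑ c, ∑ a, f a b c := by
  rw [Finset.sum_comm]
  exact Finset.sum_congr rfl fun b _ => Finset.sum_comm

lemma Msum_apply {m b b' k : ℕ} (d : Fin k → Matrix (Fin m) (Fin m) ℝ)
    (F : Fin k → (Mat b → Mat b')) (X : BMat m b) (p q : Fin m × Fin b') :
    (∑ j, lTensorId (dsChannel (d j)) (rTensorId (F j) X)) p q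
      = if p.1 = q.1 then ∑ j, ∑ y, (d j p.1 y : ℂ) *
          F j (fun kk kk' => X (y, kk) (y, kk')) p.2 q.2 else 0 := by
  rw [Matrix.sum_apply]
  by_cases h : p.1 = q.1 <;>
    simp [lTensorId, rTensorId, dsChannel, h]

end CDSHelpers

/-- conditionally doubly stochastic channels are CUSC. -/
theorem cds_subset_cusc {m b b' k : ℕ}
    (d : Fin k → Matrix (Fin m) (Fin m) ℝ) (hd : ∀ j, IsDoublyStochastic (d j))
    (F : Fin k → (Mat b → Mat b')) (hF : ∀ j, IsCP (F j))
    (hFsum : IsCPTP (fun ρ : Mat b => ∑ j, F j ρ)) :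
    CUSC (fun X : BMat m b => ∑ j, lTensorId (dsChannel (d j)) (rTensorId (F j) X)) := by
  set Mfun : BMat m b → BMat m b' :=
    fun X => ∑ j, lTensorId (dsChannel (d j)) (rTensorId (F j) X) with hMfun
  have hone : ∀ (j : Fin k) (y : Fin m), (∑ x, (d j x y : ℂ)) = 1 := by
    intro j y
    rw [show (∑ x, ((d j x y : ℝ) : ℂ)) = ((∑ x, d j x y : ℝ) : ℂ) by push_cast; ring,
      (hd j).2.2 y, Complex.ofReal_one]
  have hrow : ∀ (j : Fin k) (x : Fin m), (∑ y, (d j x y : ℂ)) = 1 := by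
    intro j x
    rw [show (∑ y, ((d j x y : ℝ) : ℂ)) = ((∑ y, d j x y : ℝ) : ℂ) by push_cast; ring,
      (hd j).2.1 x, Complex.ofReal_one]
  -- linearity
  have hlin : IsLinearMap ℂ Mfun := by
    constructor
    · intro X Y
      ext p q
      simp only [hMfun]
      rw [Matrix.add_apply, Msum_apply, Msum_apply, Msum_apply]
      by_cases h : p.1 = q.1
      · simp only [if_pos h]
        rw [← Finset.sum_add_distrib]
        refine Finset.sum_congr rfl fun j _ => ?_
        rw [← Finset.sum_add_distrib]
        refine Finset.sum_congr rfl fun y _ => ?_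
        rw [show (fun kk kk' => (X + Y) (y, kk) (y, kk'))
            = ((fun kk kk' => X (y, kk) (y, kk')) : Mat b) + (fun kk kk' => Y (y, kk) (y, kk')) from rfl]
        erw [(hF j).1.map_add]
        rw [Matrix.add_apply, mul_add]
      · simp [h]
    · intro c X
      ext p q
      simp only [hMfun]
      rw [Matrix.smul_apply, Msum_apply, Msum_apply]
      by_cases h : p.1 = q.1
      · simp only [if_pos h, smul_eq_mul, Finset.mul_sum]
        refine Finset.sum_congr rfl fun j _ => Finset.sum_congr rfl fun y _ => ?_
        rw [show (fun kk kk' => (c • X) (y, kk) (y, kk'))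
            = c • ((fun kk kk' => X (y, kk) (y, kk')) : Mat b) from rfl]
        erw [(hF j).1.map_smul]
        rw [Matrix.smul_apply, smul_eq_mul]
        ring
      · simp [h]
  -- trace preservation
  have htp : ∀ X : BMat m b, (Mfun X).trace = X.trace := by
    intro X
    have hx : ∀ (x : Fin m) (i : Fin b'), Mfun X (x, i) (x, i)
        = ∑ jy : Fin k × Fin m, (d jy.1 x jy.2 : ℂ) *
            F jy.1 (fun kk kk' => X (jy.2, kk) (jy.2, kk')) i i := by
      intro x i
      simp only [hMfun]
      rw [Msum_apply, if_pos rfl, Fintype.sum_prod_type]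
    have h1 : (Mfun X).trace
        = ∑ x, ∑ i, ∑ jy : Fin k × Fin m, (d jy.1 x jy.2 : ℂ) *
            F jy.1 (fun kk kk' => X (jy.2, kk) (jy.2, kk')) i i := by
      rw [trace_eq_sum, Fintype.sum_prod_type]
      exact Finset.sum_congr rfl fun x _ => Finset.sum_congr rfl fun i _ => hx x i
    rw [h1, comm3, comm3]
    have h2 : ∀ jy : Fin k × Fin m,
        (∑ x, ∑ i, (d jy.1 x jy.2 : ℂ) *
          F jy.1 (fun kk kk' => X (jy.2, kk) (jy.2, kk')) i i)
        = (F jy.1 (fun kk kk' => X (jy.2, kk) (jy.2, kk'))).trace := by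
      intro jy
      rw [show (∑ x, ∑ i, (d jy.1 x jy.2 : ℂ) *
            F jy.1 (fun kk kk' => X (jy.2, kk) (jy.2, kk')) i i)
          = (∑ x, (d jy.1 x jy.2 : ℂ)) *
            (∑ i, F jy.1 (fun kk kk' => X (jy.2, kk) (jy.2, kk')) i i) from by
        rw [Finset.sum_mul_sum]]
      rw [hone, one_mul, trace_eq_sum]
    rw [Finset.sum_congr rfl fun jy _ => h2 jy, Fintype.sum_prod_type, Finset.sum_comm]
    have h3 : ∀ y : Fin m,
        (∑ j, (F j (fun kk kk' => X (y, kk) (y, kk'))).trace)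
        = Matrix.trace ((fun kk kk' => X (y, kk) (y, kk')) : Mat b) := by
      intro y
      rw [← Matrix.trace_sum]
      exact hFsum.2.1 _
    rw [Finset.sum_congr rfl fun y _ => h3 y]
    simp only [trace_eq_sum, Fintype.sum_prod_type]
    rfl
  -- Choi positivity
  have hchoi : (choi Mfun).PosSemidef := by
    set S : Fin m → Fin m → Matrix ((Fin m × Fin b) × (Fin m × Fin b')) (Fin b × Fin b') ℂ :=
      fun x y P r => (if P.1.1 = y ∧ P.2.1 = x then 1 else 0) *
        ((if r.1 = P.1.2 then 1 else 0) * (if r.2 = P.2.2 then 1 else 0)) with hS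
    have hentry : ∀ P Q : (Fin m × Fin b) × (Fin m × Fin b'),
        choi Mfun P Q = if P.2.1 = Q.2.1 ∧ P.1.1 = Q.1.1 then
          ∑ j, (d j P.2.1 P.1.1 : ℂ) * choi (F j) (P.1.2, P.2.2) (Q.1.2, Q.2.2) else 0 := by
      intro P Q
      rw [show choi Mfun P Q = Mfun (Matrix.single P.1 Q.1 1) P.2 Q.2 from rfl]
      simp only [hMfun]
      rw [Msum_apply]
      have hblkE : ∀ y : Fin m,
          (fun kk kk' => Matrix.single P.1 Q.1 (1:ℂ) (y, kk) (y, kk'))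
          = if P.1.1 = y ∧ Q.1.1 = y then Matrix.single P.1.2 Q.1.2 (1:ℂ) else (0 : Mat b) := by
        intro y
        by_cases hy : P.1.1 = y ∧ Q.1.1 = y
        · funext kk kk'
          rw [if_pos hy]
          obtain ⟨hy1, hy2⟩ := hy
          simp [Matrix.single, Prod.ext_iff, hy1, hy2]
        · funext kk kk'
          rw [if_neg hy]
          have hne : ¬(P.1 = (y, kk) ∧ Q.1 = (y, kk')) := by
            intro h
            exact hy ⟨by rw [h.1], by rw [h.2]⟩
          simp [Matrix.single, hne]
      by_cases hc : P.2.1 = Q.2.1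
      · rw [if_pos hc]
        by_cases hc2 : P.1.1 = Q.1.1
        · rw [if_pos ⟨hc, hc2⟩]
          refine Finset.sum_congr rfl fun j _ => ?_
          rw [Finset.sum_congr rfl fun y (_ : y ∈ Finset.univ) => by rw [hblkE y]]
          simp only [apply_ite (F j), (hF j).1.map_zero,
            apply_ite (fun M : Mat b' => M P.2.2 Q.2.2), Matrix.zero_apply, mul_ite, mul_zero,
            ← hc2, and_self, Finset.sum_ite_eq, Finset.mem_univ, if_true]
          rfl
        · have hno : ∀ y, ¬(P.1.1 = y ∧ Q.1.1 = y) := fun y h => hc2 (h.1.trans h.2.symm)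
          rw [if_neg (by tauto : ¬(P.2.1 = Q.2.1 ∧ P.1.1 = Q.1.1))]
          rw [show (0:ℂ) = ∑ j : Fin k, 0 from by simp]
          refine Finset.sum_congr rfl fun j _ => ?_
          rw [Finset.sum_congr rfl fun y (_ : y ∈ Finset.univ) => by rw [hblkE y]]
          simp [hno, (hF j).1.map_zero]
      · rw [if_neg hc, if_neg (by tauto : ¬(P.2.1 = Q.2.1 ∧ P.1.1 = Q.1.1))]
    have keyC : choi Mfun = ∑ j, ∑ x, ∑ y, (d j x y : ℂ) • (S x y * choi (F j) * (S x y)ᴴ) := by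
      ext P Q
      rw [hentry]
      simp only [Matrix.sum_apply, Matrix.smul_apply, smul_eq_mul]
      have hSCS : ∀ (j : Fin k) (x y : Fin m),
          (S x y * choi (F j) * (S x y)ᴴ) P Q
          = (if P.1.1 = y ∧ P.2.1 = x then 1 else 0) * ((if Q.1.1 = y ∧ Q.2.1 = x then 1 else 0) *
            choi (F j) (P.1.2, P.2.2) (Q.1.2, Q.2.2)) := by
        intro j x y
        simp only [Matrix.mul_apply, Matrix.conjTranspose_apply]
        simp only [Matrix.mul_apply, Matrix.conjTranspose_apply, hS, Fintype.sum_prod_type,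
          Complex.star_def, _root_.map_mul, apply_ite (⇑(starRingEnd ℂ)), map_zero, _root_.map_one,
          mul_ite, mul_zero, mul_one, ite_mul, zero_mul, one_mul,
          Finset.sum_ite_eq, Finset.sum_ite_eq', Finset.mem_univ, if_true]
      rw [Finset.sum_congr rfl fun j (_ : j ∈ Finset.univ) =>
        Finset.sum_congr rfl fun x (_ : x ∈ Finset.univ) =>
        Finset.sum_congr rfl fun y (_ : y ∈ Finset.univ) => by
          rw [show ((d j x y : ℂ) * ((S x y * choi (F j) * (S x y)ᴴ) P Q))
              = (d j x y : ℂ) * ((if P.1.1 = y ∧ P.2.1 = x then (1:ℂ) else 0) *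
                ((if Q.1.1 = y ∧ Q.2.1 = x then (1:ℂ) else 0) *
                  choi (F j) (P.1.2, P.2.2) (Q.1.2, Q.2.2))) from by rw [hSCS j x y]]]
      by_cases hc : P.2.1 = Q.2.1 ∧ P.1.1 = Q.1.1
      · obtain ⟨hc1, hc2⟩ := hc
        rw [if_pos ⟨hc1, hc2⟩]
        refine Finset.sum_congr rfl fun j _ => ?_
        simp only [← hc1, ← hc2, ite_and, mul_ite, mul_zero, mul_one, ite_mul, zero_mul, one_mul,
          Finset.sum_ite_eq, Finset.sum_ite_eq', Finset.mem_univ, if_true]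
      · rw [if_neg hc]
        symm
        refine Finset.sum_eq_zero fun j _ => Finset.sum_eq_zero fun x _ => Finset.sum_eq_zero fun y _ => ?_
        by_cases h1 : P.1.1 = y ∧ P.2.1 = x
        · by_cases h2 : Q.1.1 = y ∧ Q.2.1 = x
          · exact absurd ⟨h1.2.trans h2.2.symm, h1.1.trans h2.1.symm⟩ hc
          · simp [h2]
        · simp [h1]
    rw [keyC]
    refine psd_sum _ _ fun j _ => psd_sum _ _ fun x _ => psd_sum _ _ fun y _ => ?_
    exact psd_real_smul ((hF j).2.mul_mul_conjTranspose_same (S x y)) ((hd j).1 x y)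
  refine ⟨⟨hlin, htp, hchoi⟩, ?_, ?_⟩
  · -- conditionally unital
    intro ρ hρ
    refine ⟨∑ j, F j ρ, ⟨cp_preserves_psd hFsum.1 hFsum.2.2 hρ.1, by
      rw [show (∑ j, F j ρ).trace = ((fun σ : Mat b => ∑ j, F j σ) ρ).trace from rfl,
        hFsum.2.1, hρ.2]⟩, ?_⟩
    ext p q
    simp only [hMfun]
    rw [Msum_apply]
    have hblk : ∀ y : Fin m, (fun kk kk' => (uMat m ⊗ₖ ρ) (y, kk) (y, kk')) = ((m : ℂ)⁻¹ • ρ : Mat b) := by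
      intro y
      funext kk kk'
      simp [uMat, Matrix.kroneckerMap_apply, Matrix.smul_apply, Matrix.one_apply, smul_eq_mul]
    have hRHS : (uMat m ⊗ₖ (∑ j, F j ρ)) p q
        = (if p.1 = q.1 then (m:ℂ)⁻¹ else 0) * (∑ j, F j ρ) p.2 q.2 := by
      by_cases h : p.1 = q.1 <;>
        simp [uMat, Matrix.kroneckerMap_apply, Matrix.smul_apply, Matrix.one_apply, h]
    rw [hRHS]
    by_cases h : p.1 = q.1
    · rw [if_pos h, if_pos h]
      rw [Finset.sum_congr rfl fun j (_ : j ∈ Finset.univ) => Finset.sum_congr rfl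
        fun y (_ : y ∈ Finset.univ) => by rw [hblk y, (hF j).1.map_smul]]
      simp only [Matrix.smul_apply, smul_eq_mul]
      rw [show (∑ j, ∑ y, (d j p.1 y : ℂ) * ((m:ℂ)⁻¹ * F j ρ p.2 q.2))
          = ∑ j, (∑ y, (d j p.1 y : ℂ)) * ((m:ℂ)⁻¹ * F j ρ p.2 q.2) from
        Finset.sum_congr rfl fun j _ => by rw [Finset.sum_mul]]
      simp only [hrow, one_mul]
      rw [Matrix.sum_apply, Finset.mul_sum]
    · rw [if_neg h, if_neg h, zero_mul]
  · -- semi-causal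
    intro E hE X
    have hpt : ∀ Z : BMat m b, ptraceA (Mfun Z)
        = fun i i' => ∑ j, F j (fun kk kk' => ∑ y, Z (y, kk) (y, kk')) i i' := by
      intro Z
      funext i i'
      have hx : ∀ x : Fin m, Mfun Z (x, i) (x, i')
          = ∑ j, ∑ y, (d j x y : ℂ) * F j (fun kk kk' => Z (y, kk) (y, kk')) i i' := by
        intro x
        simp only [hMfun]
        rw [Msum_apply, if_pos rfl]
      rw [show ptraceA (Mfun Z) i i' = ∑ x, Mfun Z (x, i) (x, i') from rfl,
        Finset.sum_congr rfl fun x _ => hx x, comm3]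
      rw [Finset.sum_congr rfl fun j (_ : j ∈ Finset.univ) =>
        Finset.sum_congr rfl fun y (_ : y ∈ Finset.univ) => by
          rw [← Finset.sum_mul, hone j y, one_mul]]
      refine Finset.sum_congr rfl fun j _ => ?_
      have hxx : @Eq (Mat b) (fun kk kk' => ∑ y, Z (y, kk) (y, kk'))
          (∑ y, ((fun kk kk' => Z (y, kk) (y, kk')) : Mat b)) := by
        funext kk kk'
        exact (Matrix.sum_apply kk kk' Finset.univ
          (fun y => ((fun kk kk' => Z (y, kk) (y, kk')) : Mat b))).symm
      rw [hxx, show F j (∑ y, ((fun kk kk' => Z (y, kk) (y, kk')) : Mat b))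
          = (IsLinearMap.mk' (F j) (hF j).1) (∑ y, ((fun kk kk' => Z (y, kk) (y, kk')) : Mat b)) from rfl]
      erw [map_sum]
      exact (Matrix.sum_apply ..).symm
    rw [hpt (lTensorId E X), hpt X]
    funext i i'
    have hkey : (fun kk kk' => ∑ y, (lTensorId E X) (y, kk) (y, kk'))
        = (fun kk kk' => ∑ y, X (y, kk) (y, kk')) := by
      funext kk kk'
      have h1 : ∑ y, (lTensorId E X) (y, kk) (y, kk')
          = (E (fun a a' => X (a, kk) (a', kk'))).trace := by
        rw [trace_eq_sum]
        exact Finset.sum_congr rfl fun y _ => rfl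
      rw [h1]
      exact (hE.2.1 _).trans rfl
    rw [hkey]


end
end

section
/- Let P = (p_{xy}) be an m×n joint probability matrix and Q = (q_{xw}) an m×n' joint probability matrix, and let ρ_{XY} = Σ_{x,y} p_{xy} |x⟩⟨x| ⊗ |y⟩⟨y| and σ_{XY'} = Σ_{x,w} q_{xw} |x⟩⟨x| ⊗ |w⟩⟨w| be the corresponding diagonal bipartite density matrices. Then there exists a channel N ∈ CUSC(XY → XY') with σ_{XY'} = N(ρ_{XY}) if and only if there exist a row-stochastic n×n' matrix (t_{yw}) and doubly stochastic m×m matrices D_{(y,w)} (for y ∈ {1,…,n}, w ∈ {1,…,n'}) such that q_w = Σ_{y=1}^n t_{yw} D_{(y,w)} p_y for every w, where p_y ∈ ℝ^m and q_w ∈ ℝ^m denote the columns of P and Q. -/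
open Matrix Kronecker
open scoped ComplexOrder

noncomputable section

open scoped Classical

/-! ### Auxiliary material for the proof -/

section AuxProof

lemma psd_diag_nonneg {ι : Type} [Fintype ι] [DecidableEq ι] {M : Matrix ι ι ℂ}
    (hM : M.PosSemidef) (i : ι) : 0 ≤ M i i := by
  exact hM.diag_nonneg

lemma complex_eq_re_of_nonneg {z : ℂ} (h : 0 ≤ z) : z = ((z.re : ℝ) : ℂ) := by
  have h2 := (Complex.nonneg_iff.mp h).2
  exact Complex.ext (by simp) (by simp [← h2])

/-- The classical kernel built from a row-stochastic matrix and doubly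
stochastic matrices. -/
def cKer {m n n' : ℕ} (t : Matrix (Fin n) (Fin n') ℝ)
    (Dm : Fin n → Fin n' → Matrix (Fin m) (Fin m) ℝ) :
    (Fin m × Fin n') → (Fin m × Fin n) → ℝ :=
  fun p r => t r.2 p.2 * Dm r.2 p.2 p.1 r.1

/-- The classical channel built from a kernel. -/
def cChan {m n n' : ℕ} (t : Matrix (Fin n) (Fin n') ℝ)
    (Dm : Fin n → Fin n' → Matrix (Fin m) (Fin m) ℝ) : BMat m n → BMat m n' :=
  fun X => Matrix.of fun p q =>
    if p = q then ∑ r, ((cKer t Dm p r : ℝ) : ℂ) * X r r else 0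

variable {m n n' : ℕ} {t : Matrix (Fin n) (Fin n') ℝ}
  {Dm : Fin n → Fin n' → Matrix (Fin m) (Fin m) ℝ}

lemma cChan_apply (X : BMat m n) (p q : Fin m × Fin n') :
    cChan t Dm X p q =
      if p = q then ∑ r, ((cKer t Dm p r : ℝ) : ℂ) * X r r else 0 := rfl

lemma cKer_nonneg (ht : RowStochastic t) (hDm : ∀ y w, IsDoublyStochastic (Dm y w))
    (p : Fin m × Fin n') (r : Fin m × Fin n) : 0 ≤ cKer t Dm p r :=
  mul_nonneg (ht.1 _ _) ((hDm _ _).1 _ _)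

lemma cKer_sum_x (hDm : ∀ y w, IsDoublyStochastic (Dm y w))
    (w : Fin n') (r : Fin m × Fin n) :
    ∑ x : Fin m, cKer t Dm (x, w) r = t r.2 w := by
  simp only [cKer]
  rw [← Finset.mul_sum, (hDm r.2 w).2.2 r.1, mul_one]

lemma cKer_sum_x' (hDm : ∀ y w, IsDoublyStochastic (Dm y w))
    (p : Fin m × Fin n') (y : Fin n) :
    ∑ x' : Fin m, cKer t Dm p (x', y) = t y p.2 := by
  simp only [cKer]
  rw [← Finset.mul_sum, (hDm y p.2).2.1 p.1, mul_one]

lemma cKer_sum_out (ht : RowStochastic t) (hDm : ∀ y w, IsDoublyStochastic (Dm y w))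
    (r : Fin m × Fin n) : ∑ p : Fin m × Fin n', cKer t Dm p r = 1 := by
  rw [Fintype.sum_prod_type, Finset.sum_comm]
  have : ∀ w : Fin n', ∑ x : Fin m, cKer t Dm (x, w) r = t r.2 w :=
    fun w => cKer_sum_x hDm w r
  simp only [this]
  exact ht.2 r.2

lemma cChan_linear : IsLinearMap ℂ (cChan t Dm) := by
  constructor
  · intro X Y
    ext p q
    by_cases h : p = q <;>
      simp [cChan_apply, h, mul_add, Finset.sum_add_distrib]
  · intro c X
    ext p q
    by_cases h : p = q <;>
      simp [cChan_apply, h, Finset.mul_sum, smul_eq_mul, mul_left_comm]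

lemma cChan_tp (ht : RowStochastic t) (hDm : ∀ y w, IsDoublyStochastic (Dm y w))
    (X : BMat m n) : (cChan t Dm X).trace = X.trace := by
  simp only [Matrix.trace, Matrix.diag, cChan_apply, if_pos rfl, eq_self_iff_true, if_true]
  rw [Finset.sum_comm]
  have : ∀ r : Fin m × Fin n,
      ∑ p : Fin m × Fin n', ((cKer t Dm p r : ℝ) : ℂ) * X r r = X r r := by
    intro r
    rw [← Finset.sum_mul]
    have h1 : ∑ p : Fin m × Fin n', ((cKer t Dm p r : ℝ) : ℂ)
        = ((∑ p : Fin m × Fin n', cKer t Dm p r : ℝ) : ℂ) := by push_cast; rfl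
    rw [h1, cKer_sum_out ht hDm r]
    simp
  simp only [this]

lemma cChan_choi_psd (ht : RowStochastic t) (hDm : ∀ y w, IsDoublyStochastic (Dm y w)) :
    (choi (cChan t Dm)).PosSemidef := by
  have hdiag : choi (cChan t Dm) =
      Matrix.diagonal (fun p : (Fin m × Fin n) × (Fin m × Fin n') =>
        ((cKer t Dm p.2 p.1 : ℝ) : ℂ)) := by
    ext p q
    by_cases h : p = q
    · subst h
      simp only [choi, cChan_apply, Matrix.diagonal_apply_eq, if_pos rfl,
        eq_self_iff_true, if_true, Matrix.single, Matrix.of_apply, and_self,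
        mul_ite, mul_one, mul_zero]
      rw [Finset.sum_ite_eq]
      simp
    · rw [Matrix.diagonal_apply_ne _ h]
      simp only [choi, cChan_apply]
      by_cases h2 : p.2 = q.2
      · rw [if_pos h2]
        apply Finset.sum_eq_zero
        intro r _
        have h1 : p.1 ≠ q.1 := fun hh => h (Prod.ext hh h2)
        have hz : Matrix.single p.1 q.1 (1 : ℂ) r r = 0 := by
          simp only [Matrix.single, Matrix.of_apply]
          rw [if_neg]
          rintro ⟨ha, hb⟩
          exact h1 (ha.trans hb.symm)
        rw [hz, mul_zero]
      · rw [if_neg h2]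
  rw [hdiag]
  refine Matrix.posSemidef_diagonal_iff.mpr fun p => ?_
  have := cKer_nonneg ht hDm p.2 p.1
  exact_mod_cast this

lemma cChan_cptp (ht : RowStochastic t) (hDm : ∀ y w, IsDoublyStochastic (Dm y w)) :
    IsCPTP (cChan t Dm) :=
  ⟨cChan_linear, cChan_tp ht hDm, cChan_choi_psd ht hDm⟩

lemma cChan_condUnital (ht : RowStochastic t)
    (hDm : ∀ y w, IsDoublyStochastic (Dm y w)) : CondUnital (cChan t Dm) := by
  intro ρ hρ
  refine ⟨Matrix.of fun w w' => if w = w' then ∑ y, ((t y w : ℝ) : ℂ) * ρ y y else 0,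
    ⟨?_, ?_⟩, ?_⟩
  · have hd : (Matrix.of fun w w' : Fin n' =>
        if w = w' then ∑ y, ((t y w : ℝ) : ℂ) * ρ y y else 0) =
        Matrix.diagonal (fun w => ∑ y, ((t y w : ℝ) : ℂ) * ρ y y) := by
      ext w w'
      simp [Matrix.diagonal]
    rw [hd]
    refine Matrix.posSemidef_diagonal_iff.mpr fun w => ?_
    refine Finset.sum_nonneg fun y _ => mul_nonneg ?_ (psd_diag_nonneg hρ.1 y)
    exact_mod_cast ht.1 y w
  · simp only [Matrix.trace, Matrix.diag, Matrix.of_apply, if_pos rfl,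
      eq_self_iff_true, if_true]
    rw [Finset.sum_comm]
    have : ∀ y : Fin n, ∑ w : Fin n', ((t y w : ℝ) : ℂ) * ρ y y = ρ y y := by
      intro y
      rw [← Finset.sum_mul]
      have h1 : ∑ w : Fin n', ((t y w : ℝ) : ℂ) = ((∑ w, t y w : ℝ) : ℂ) := by
        push_cast; rfl
      rw [h1, ht.2 y]; simp
    simp only [this]
    exact hρ.2
  · ext p q
    by_cases h : p = q
    · subst h
      rw [cChan_apply, if_pos rfl]
      have hL : ∀ r : Fin m × Fin n, ((cKer t Dm p r : ℝ) : ℂ) * (uMat m ⊗ₖ ρ) r r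
          = ((cKer t Dm p r : ℝ) : ℂ) * ((m : ℂ)⁻¹ * ρ r.2 r.2) := by
        intro r
        congr 1
        simp [uMat, Matrix.one_apply]
      rw [Finset.sum_congr rfl fun r _ => hL r]
      have hR : (uMat m ⊗ₖ (Matrix.of fun w w' : Fin n' =>
            if w = w' then ∑ y, ((t y w : ℝ) : ℂ) * ρ y y else 0)) p p
          = (m : ℂ)⁻¹ * ∑ y, ((t y p.2 : ℝ) : ℂ) * ρ y y := by
        simp [uMat, Matrix.one_apply]
      rw [hR, Finset.mul_sum, Fintype.sum_prod_type, Finset.sum_comm]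
      refine Finset.sum_congr rfl fun y _ => ?_
      show ∑ x'' : Fin m, ((cKer t Dm p (x'', y) : ℝ) : ℂ) * ((m : ℂ)⁻¹ * ρ y y)
          = (m : ℂ)⁻¹ * (((t y p.2 : ℝ) : ℂ) * ρ y y)
      rw [← Finset.sum_mul]
      have hc : ∑ x'' : Fin m, ((cKer t Dm p (x'', y) : ℝ) : ℂ) = ((t y p.2 : ℝ) : ℂ) := by
        exact_mod_cast cKer_sum_x' hDm p y
      rw [hc]; ring
    · rw [cChan_apply, if_neg h]
      symm
      simp only [Matrix.kroneckerMap_apply, uMat, Matrix.smul_apply, Matrix.one_apply,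
        Matrix.of_apply, smul_eq_mul]
      by_cases h1 : p.1 = q.1
      · have h2 : p.2 ≠ q.2 := fun hh => h (Prod.ext h1 hh)
        simp [h1, h2]
      · simp [h1]

lemma cChan_ptraceA_apply (hDm : ∀ y w, IsDoublyStochastic (Dm y w)) (X : BMat m n)
    (w w' : Fin n') : ptraceA (cChan t Dm X) w w' =
      if w = w' then ∑ r : Fin m × Fin n, ((t r.2 w : ℝ) : ℂ) * X r r else 0 := by
  show (∑ x : Fin m, cChan t Dm X (x, w) (x, w')) = _
  by_cases h : w = w'
  · subst h
    simp only [if_pos rfl, cChan_apply, eq_self_iff_true, if_true]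
    rw [Finset.sum_comm]
    refine Finset.sum_congr rfl fun r _ => ?_
    rw [← Finset.sum_mul]
    have hc : ∑ x : Fin m, ((cKer t Dm (x, w) r : ℝ) : ℂ) = ((t r.2 w : ℝ) : ℂ) := by
      exact_mod_cast cKer_sum_x hDm w r
    rw [hc]
  · rw [if_neg h]
    apply Finset.sum_eq_zero
    intro x _
    rw [cChan_apply, if_neg]
    intro hx
    exact h (congrArg Prod.snd hx)

lemma cChan_semiCausal (hDm : ∀ y w, IsDoublyStochastic (Dm y w)) :
    SemiCausal (cChan t Dm) := by
  intro M hM X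
  funext w w'
  rw [cChan_ptraceA_apply hDm, cChan_ptraceA_apply hDm]
  by_cases h : w = w'
  · subst h
    simp only [if_pos rfl]
    have key : ∀ Y : BMat m n, ∑ r : Fin m × Fin n, ((t r.2 w : ℝ) : ℂ) * Y r r
        = ∑ y : Fin n, ((t y w : ℝ) : ℂ) * ∑ k : Fin m, Y (k, y) (k, y) := by
      intro Y
      rw [Fintype.sum_prod_type, Finset.sum_comm]
      refine Finset.sum_congr rfl fun y _ => ?_
      rw [Finset.mul_sum]
    rw [key, key]
    refine Finset.sum_congr rfl fun y _ => ?_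
    congr 1
    have hl : ∑ k : Fin m, lTensorId M X (k, y) (k, y)
        = (M (fun a b => X (a, y) (b, y))).trace := by
      simp [lTensorId, Matrix.trace, Matrix.diag]
    rw [hl]
    exact (hM.2.1 _).trans (by simp [Matrix.trace, Matrix.diag])
  · simp [if_neg h]

lemma cChan_CUSC (ht : RowStochastic t) (hDm : ∀ y w, IsDoublyStochastic (Dm y w)) :
    CUSC (cChan t Dm) :=
  ⟨cChan_cptp ht hDm, cChan_condUnital ht hDm, cChan_semiCausal hDm⟩

lemma classicalState_eq_sum {m n : ℕ} (P : Matrix (Fin m) (Fin n) ℝ) :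
    classicalState P = ∑ r : Fin m × Fin n, (P r.1 r.2 : ℂ) • Matrix.single r r 1 := by
  ext p q
  simp only [classicalState, Matrix.of_apply, Matrix.sum_apply, Matrix.smul_apply,
    Matrix.single, smul_eq_mul]
  by_cases h : p = q
  · subst h
    rw [if_pos rfl, Finset.sum_eq_single p]
    · simp
    · intro b _ hb
      rw [if_neg, mul_zero]
      rintro ⟨hb1, _⟩
      exact hb hb1
    · intro h
      exact absurd (Finset.mem_univ _) h
  · rw [if_neg h]
    symm
    apply Finset.sum_eq_zero
    intro r _
    rw [if_neg, mul_zero]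
    rintro ⟨h1, h2⟩
    exact h (h1.symm.trans h2)

lemma std_density {n : ℕ} (y : Fin n) : IsDensity (Matrix.single y y (1 : ℂ)) := by
  constructor
  · have hd : Matrix.single y y (1 : ℂ)
        = Matrix.diagonal (fun i => if y = i then 1 else 0) := by
      ext i j
      simp only [Matrix.single, Matrix.diagonal, Matrix.of_apply]
      by_cases h : i = j
      · subst h; simp
      · rw [if_neg h, if_neg]
        rintro ⟨h1, h2⟩
        exact h (h1.symm.trans h2)
    rw [hd]
    refine Matrix.posSemidef_diagonal_iff.mpr fun i => ?_
    by_cases h : y = i <;> simp [h]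
  · simp [Matrix.trace, Matrix.diag, Matrix.single, Finset.sum_ite_eq]

lemma uMat_kron_std {m n : ℕ} (y : Fin n) :
    uMat m ⊗ₖ Matrix.single y y (1 : ℂ)
      = ∑ x' : Fin m, (m : ℂ)⁻¹ • Matrix.single ((x', y) : Fin m × Fin n) (x', y) 1 := by
  ext ⟨a, b⟩ ⟨a', b'⟩
  simp only [Matrix.kroneckerMap_apply, uMat, Matrix.smul_apply, Matrix.one_apply,
    Matrix.sum_apply, Matrix.single, Matrix.of_apply, smul_eq_mul, Prod.mk.injEq]
  by_cases hb : y = b <;> by_cases hb' : y = b' <;> by_cases ha : a = a' <;>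
    simp [hb, hb', ha, Finset.sum_ite_eq, mul_ite, ite_and] <;> tauto

lemma prep_cptp {m : ℕ} (x'' : Fin m) :
    IsCPTP (fun A : Mat m => A.trace • Matrix.single x'' x'' (1 : ℂ)) := by
  have htr : (Matrix.single x'' x'' (1 : ℂ)).trace = 1 := by
    simp [Matrix.trace, Matrix.diag, Matrix.single, Finset.sum_ite_eq]
  refine ⟨⟨fun A B => ?_, fun k A => ?_⟩, fun A => ?_, ?_⟩
  · rw [Matrix.trace_add, add_smul]
  · rw [Matrix.trace_smul, smul_assoc]
  · rw [Matrix.trace_smul, htr, smul_eq_mul, mul_one]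
  · have hB : choi (fun A : Mat m => A.trace • Matrix.single x'' x'' (1 : ℂ))
        = (Matrix.of fun (p : Fin m × Fin m) (i : Fin m) =>
            if p.1 = i ∧ p.2 = x'' then (1 : ℂ) else 0) *
          (Matrix.of fun (p : Fin m × Fin m) (i : Fin m) =>
            if p.1 = i ∧ p.2 = x'' then (1 : ℂ) else 0)ᴴ := by
      ext p q
      simp only [choi, Matrix.mul_apply, Matrix.conjTranspose_apply, Matrix.of_apply,
        Matrix.smul_apply, Matrix.single, smul_eq_mul, Matrix.trace, Matrix.diag]
      by_cases hp : p.2 = x'' <;> by_cases hq : q.2 = x'' <;>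
        by_cases hpq : p.1 = q.1 <;>
        simp_all [Finset.sum_ite_eq, mul_ite, ite_mul, ite_and,
          apply_ite (star : ℂ → ℂ), eq_comm]
    rw [hB]
    exact Matrix.posSemidef_self_mul_conjTranspose _

lemma lTensorId_prep {m n : ℕ} (x'' x' : Fin m) (y : Fin n) :
    lTensorId (fun A : Mat m => A.trace • Matrix.single x'' x'' (1 : ℂ))
      (Matrix.single ((x', y) : Fin m × Fin n) (x', y) 1)
    = Matrix.single ((x'', y) : Fin m × Fin n) (x'', y) 1 := by
  ext ⟨a, b⟩ ⟨a', b'⟩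
  simp only [lTensorId, Matrix.smul_apply, Matrix.single, Matrix.of_apply,
    smul_eq_mul, Matrix.trace, Matrix.diag, Prod.mk.injEq]
  by_cases hb : y = b <;> by_cases hb' : y = b' <;>
    simp [hb, hb', Finset.sum_ite_eq, mul_ite, ite_and] <;>
    first
      | tauto
      | (split_ifs <;> simp_all)

end AuxProof

/-- quantum conditional majorization reduces to classical conditional
majorization on classical states. -/
theorem classical_reduction {m n n' : ℕ}
    (P : Matrix (Fin m) (Fin n) ℝ) (Q : Matrix (Fin m) (Fin n') ℝ)
    (hP : JointProb P) (hQ : JointProb Q) :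
    (∃ N : BMat m n → BMat m n', CUSC N ∧ classicalState Q = N (classicalState P)) ↔
      (∃ t : Matrix (Fin n) (Fin n') ℝ, RowStochastic t ∧
        ∃ Dm : Fin n → Fin n' → Matrix (Fin m) (Fin m) ℝ,
          (∀ y w, IsDoublyStochastic (Dm y w)) ∧
          ∀ (w : Fin n') (x : Fin m),
            Q x w = ∑ y, t y w * ∑ x', Dm y w x x' * P x' y) := by
  have hm : 0 < m := by
    rcases Nat.eq_zero_or_pos m with h | h
    · exfalso; subst h; simpa using hP.2
    · exact h
  constructor
  · rintro ⟨N, ⟨⟨hlin, hTP, hChoi⟩, hCU, hSC⟩, hEq⟩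
    set L := IsLinearMap.mk' N hlin with hL
    set c : (Fin m × Fin n') → (Fin m × Fin n) → ℝ :=
      fun p r => (N (Matrix.single r r 1) p p).re with hcdef
    have hcnn : ∀ p r, 0 ≤ c p r ∧
        N (Matrix.single r r 1) p p = ((c p r : ℝ) : ℂ) := by
      intro p r
      have h0 : 0 ≤ N (Matrix.single r r 1) p p := by
        have := psd_diag_nonneg hChoi (r, p)
        simpa [choi] using this
      exact ⟨(Complex.nonneg_iff.mp h0).1, complex_eq_re_of_nonneg h0⟩
    -- trace preservation in kernel form
    have hT1 : ∀ r : Fin m × Fin n, ∑ p : Fin m × Fin n', c p r = 1 := by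
      intro r
      have h1 := hTP (Matrix.single r r 1)
      have h2 : (Matrix.single r r (1 : ℂ)).trace = 1 := by
        simp [Matrix.trace, Matrix.diag, Matrix.single, Finset.sum_ite_eq]
      have h3 : (N (Matrix.single r r 1)).trace
          = ∑ p : Fin m × Fin n', ((c p r : ℝ) : ℂ) := by
        simp only [Matrix.trace, Matrix.diag]
        exact Finset.sum_congr rfl fun p _ => (hcnn p r).2
      rw [h3, h2] at h1
      have h4 : ((∑ p : Fin m × Fin n', c p r : ℝ) : ℂ)
          = ∑ p : Fin m × Fin n', ((c p r : ℝ) : ℂ) := by push_cast; rfl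
      rw [← h4] at h1
      exact_mod_cast h1
    -- semi-causality in kernel form
    have hSCk : ∀ (w : Fin n') (y : Fin n) (x' x'' : Fin m),
        ∑ x : Fin m, c (x, w) (x'', y) = ∑ x : Fin m, c (x, w) (x', y) := by
      intro w y x' x''
      have h := hSC _ (prep_cptp x'')
        (Matrix.single ((x', y) : Fin m × Fin n) (x', y) 1)
      rw [lTensorId_prep] at h
      have h2 := congrFun (congrFun h w) w
      have e1 : ptraceA (N (Matrix.single ((x'', y) : Fin m × Fin n) (x'', y) 1)) w w
          = ∑ x : Fin m, ((c (x, w) (x'', y) : ℝ) : ℂ) := by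
        show (∑ x : Fin m, N _ (x, w) (x, w)) = _
        exact Finset.sum_congr rfl fun x _ => (hcnn (x, w) (x'', y)).2
      have e2 : ptraceA (N (Matrix.single ((x', y) : Fin m × Fin n) (x', y) 1)) w w
          = ∑ x : Fin m, ((c (x, w) (x', y) : ℝ) : ℂ) := by
        show (∑ x : Fin m, N _ (x, w) (x, w)) = _
        exact Finset.sum_congr rfl fun x _ => (hcnn (x, w) (x', y)).2
      rw [e1, e2] at h2
      have h4 : ((∑ x : Fin m, c (x, w) (x'', y) : ℝ) : ℂ)
          = ((∑ x : Fin m, c (x, w) (x', y) : ℝ) : ℂ) := by push_cast; exact h2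
      exact_mod_cast h4
    -- conditional unitality in kernel form
    have hCUk : ∀ (w : Fin n') (y : Fin n) (x₁ x₂ : Fin m),
        ∑ x' : Fin m, c (x₁, w) (x', y) = ∑ x' : Fin m, c (x₂, w) (x', y) := by
      intro w y x₁ x₂
      obtain ⟨σ, hσd, hσeq⟩ := hCU (Matrix.single y y 1) (std_density y)
      have hdec : N (uMat m ⊗ₖ Matrix.single y y 1)
          = ∑ x' : Fin m, (m : ℂ)⁻¹ •
              N (Matrix.single ((x', y) : Fin m × Fin n) (x', y) 1) := by
        rw [uMat_kron_std]
        show L (∑ x' : Fin m, _) = _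
        rw [map_sum]
        exact Finset.sum_congr rfl fun x' _ => L.map_smul _ _
      have key : ∀ x : Fin m,
          (m : ℂ)⁻¹ * ∑ x' : Fin m, ((c (x, w) (x', y) : ℝ) : ℂ)
            = (m : ℂ)⁻¹ * σ w w := by
        intro x
        have h := congrFun (congrFun hσeq ((x, w) : Fin m × Fin n')) ((x, w))
        rw [hdec] at h
        have hl : (∑ x' : Fin m, (m : ℂ)⁻¹ •
              N (Matrix.single ((x', y) : Fin m × Fin n) (x', y) 1))
              ((x, w) : Fin m × Fin n') (x, w)
            = (m : ℂ)⁻¹ * ∑ x' : Fin m, ((c (x, w) (x', y) : ℝ) : ℂ) := by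
          simp only [Matrix.sum_apply, Matrix.smul_apply, smul_eq_mul]
          rw [Finset.mul_sum]
          exact Finset.sum_congr rfl fun x' _ => by rw [(hcnn (x, w) (x', y)).2]
        have hr : (uMat m ⊗ₖ σ) ((x, w) : Fin m × Fin n') ((x, w))
            = (m : ℂ)⁻¹ * σ w w := by
          simp [uMat, Matrix.one_apply]
        rw [hl, hr] at h
        exact h
      have h12 := (key x₁).trans (key x₂).symm
      have hminv : ((m : ℂ))⁻¹ ≠ 0 :=
        inv_ne_zero (Nat.cast_ne_zero.mpr hm.ne')
      have h5 := mul_left_cancel₀ hminv h12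
      have h6 : ((∑ x' : Fin m, c (x₁, w) (x', y) : ℝ) : ℂ)
          = ((∑ x' : Fin m, c (x₂, w) (x', y) : ℝ) : ℂ) := by push_cast; exact h5
      exact_mod_cast h6
    set x0 : Fin m := ⟨0, hm⟩ with hx0
    set tm : Matrix (Fin n) (Fin n') ℝ :=
      fun y w => ∑ x : Fin m, c (x, w) (x0, y) with htm
    have htmnn : ∀ y w, 0 ≤ tm y w :=
      fun y w => Finset.sum_nonneg fun x _ => (hcnn _ _).1
    have hrow : ∀ (w : Fin n') (y : Fin n) (x : Fin m),
        ∑ x' : Fin m, c (x, w) (x', y) = tm y w := by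
      intro w y x
      have hsum : (m : ℝ) * ∑ x' : Fin m, c (x, w) (x', y)
          = ∑ x₁ : Fin m, ∑ x' : Fin m, c (x₁, w) (x', y) := by
        rw [Finset.sum_congr rfl fun x₁ _ => hCUk w y x₁ x]
        simp [Finset.sum_const, nsmul_eq_mul]
      have hsum2 : ∑ x₁ : Fin m, ∑ x' : Fin m, c (x₁, w) (x', y)
          = (m : ℝ) * tm y w := by
        rw [Finset.sum_comm, Finset.sum_congr rfl fun x' _ => hSCk w y x0 x']
        simp [Finset.sum_const, nsmul_eq_mul, htm]
      exact mul_left_cancel₀ (Nat.cast_ne_zero.mpr hm.ne' : (m : ℝ) ≠ 0)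
        (hsum.trans hsum2)
    refine ⟨tm, ⟨htmnn, ?_⟩, ?_⟩
    · intro y
      calc ∑ w, tm y w = ∑ w : Fin n', ∑ x : Fin m, c (x, w) (x0, y) := rfl
        _ = ∑ x : Fin m, ∑ w : Fin n', c (x, w) (x0, y) := Finset.sum_comm
        _ = 1 := (Fintype.sum_prod_type (f := fun p : Fin m × Fin n' => c p (x0, y))).symm.trans
            (hT1 (x0, y))
    refine ⟨fun y w => fun x x' =>
      if tm y w = 0 then (if x = x' then 1 else 0) else c (x, w) (x', y) / tm y w, ?_, ?_⟩
    · intro y w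
      by_cases h0 : tm y w = 0
      · refine ⟨fun i j => ?_, fun i => ?_, fun j => ?_⟩
        · simp only [if_pos h0]
          split <;> norm_num
        · simp [h0, Finset.sum_ite_eq']
        · simp [h0, Finset.sum_ite_eq]
      · refine ⟨fun i j => ?_, fun i => ?_, fun j => ?_⟩
        · simp only [if_neg h0]
          exact div_nonneg (hcnn _ _).1 (htmnn y w)
        · simp only [if_neg h0]
          rw [← Finset.sum_div, hrow w y i, div_self h0]
        · simp only [if_neg h0]
          rw [← Finset.sum_div, hSCk w y x0 j]
          show tm y w / tm y w = 1
          exact div_self h0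
    · intro w x
      have hQc : (Q x w : ℂ)
          = ∑ r : Fin m × Fin n, (P r.1 r.2 : ℂ) * ((c (x, w) r : ℝ) : ℂ) := by
        have h := congrFun (congrFun hEq ((x, w) : Fin m × Fin n')) ((x, w))
        have hl : classicalState Q ((x, w) : Fin m × Fin n') ((x, w)) = (Q x w : ℂ) := by
          simp [classicalState]
        have hdecP : N (classicalState P)
            = ∑ r : Fin m × Fin n, (P r.1 r.2 : ℂ) • N (Matrix.single r r 1) := by
          rw [classicalState_eq_sum]
          show L (∑ r : Fin m × Fin n, _) = _
          rw [map_sum]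
          exact Finset.sum_congr rfl fun r _ => L.map_smul _ _
        have hrr : N (classicalState P) ((x, w) : Fin m × Fin n') ((x, w))
            = ∑ r : Fin m × Fin n, (P r.1 r.2 : ℂ) * ((c (x, w) r : ℝ) : ℂ) := by
          rw [hdecP]
          simp only [Matrix.sum_apply, Matrix.smul_apply, smul_eq_mul]
          exact Finset.sum_congr rfl fun r _ => by rw [(hcnn (x, w) r).2]
        rw [hl, hrr] at h
        exact h
      have hQr : Q x w = ∑ r : Fin m × Fin n, P r.1 r.2 * c (x, w) r := by
        have : (Q x w : ℂ) = ((∑ r : Fin m × Fin n, P r.1 r.2 * c (x, w) r : ℝ) : ℂ) := by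
          rw [hQc]; push_cast; rfl
        exact_mod_cast this
      rw [hQr, Fintype.sum_prod_type, Finset.sum_comm]
      refine Finset.sum_congr rfl fun y _ => ?_
      by_cases h0 : tm y w = 0
      · have hz : ∀ x' : Fin m, c (x, w) (x', y) = 0 := by
          have hsum0 : ∑ x' : Fin m, c (x, w) (x', y) = 0 := (hrow w y x).trans h0
          intro x'
          exact (Finset.sum_eq_zero_iff_of_nonneg fun i _ => (hcnn _ _).1).mp hsum0 x'
            (Finset.mem_univ x')
        rw [h0, zero_mul]
        exact Finset.sum_eq_zero fun x' _ => by rw [hz x', mul_zero]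
      · rw [Finset.mul_sum]
        refine Finset.sum_congr rfl fun x' _ => ?_
        simp only [if_neg h0]
        field_simp
  · rintro ⟨t, ht, Dm, hDm, hQeq⟩
    refine ⟨cChan t Dm, cChan_CUSC ht hDm, ?_⟩
    ext p q
    rw [cChan_apply]
    by_cases h : p = q
    · subst h
      rw [if_pos rfl]
      have hl : classicalState Q p p = ((Q p.1 p.2 : ℝ) : ℂ) := by
        simp [classicalState]
      have hr : ∑ r : Fin m × Fin n, ((cKer t Dm p r : ℝ) : ℂ) * classicalState P r r
          = ((∑ r : Fin m × Fin n, cKer t Dm p r * P r.1 r.2 : ℝ) : ℂ) := by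
        push_cast
        refine Finset.sum_congr rfl fun r _ => ?_
        simp [classicalState]
      have hreal : Q p.1 p.2 = ∑ r : Fin m × Fin n, cKer t Dm p r * P r.1 r.2 := by
        rw [hQeq p.2 p.1, Fintype.sum_prod_type, Finset.sum_comm]
        refine Finset.sum_congr rfl fun y _ => ?_
        rw [Finset.mul_sum]
        refine Finset.sum_congr rfl fun x' _ => ?_
        simp only [cKer]
        ring
      rw [hl, hr, hreal]
    · rw [if_neg h]
      simp [classicalState, h]

end
end

section
/- For the maximally entangled state φ⁺ on ℂ^d ⊗ ℂ^d, the gambling reward equals 1 for every game: R_{T,p}(φ⁺) = 1 for every column-stochastic transition matrix T and every p ∈ [0,1]. -/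
open Matrix Kronecker
open scoped ComplexOrder

noncomputable section

open scoped Classical

/-! ### Auxiliary lemmas -/

section Aux

variable {n : ℕ}

lemma sumTopK_le_sum {ι : Type} [Fintype ι] [DecidableEq ι] (k : ℕ) (f : ι → ℝ)
    (hf : ∀ i, 0 ≤ f i) : sumTopK k f ≤ ∑ i, f i := by
  apply Finset.sup'_le
  intro s _
  exact Finset.sum_le_sum_of_subset_of_nonneg (Finset.subset_univ s) (fun i _ _ => hf i)

lemma le_sumTopK {ι : Type} [Fintype ι] [DecidableEq ι] {k : ℕ} (hk : 1 ≤ k) (f : ι → ℝ)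
    (i : ι) : f i ≤ sumTopK k f := by
  have hmem : ({i} : Finset ι) ∈ Finset.univ.powerset.filter
      fun s : Finset ι => s.card ≤ k := by
    simp [hk]
  rw [sumTopK]
  refine le_trans ?_ (Finset.le_sup' _ hmem)
  simp

lemma trace_eq_sum_eig {A : Mat n} (hA : A.IsHermitian) :
    A.trace = ∑ i, (hA.eigenvalues i : ℂ) := by
  exact hA.trace_eq_sum_eigenvalues

lemma projv_isHermitian (v : Fin n → ℂ) : (projv v).IsHermitian := by
  ext i j
  simp [projv, Matrix.conjTranspose_apply, mul_comm]

lemma projv_quad (v x : Fin n → ℂ) :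
    (star x) ⬝ᵥ (projv v *ᵥ x) = (∑ i, star (x i) * v i) * ∑ j, star (v j) * x j := by
  simp only [dotProduct, Matrix.mulVec, dotProduct, projv, Pi.star_apply]
  rw [Finset.sum_mul_sum]
  congr 1; ext i
  rw [Finset.mul_sum]
  congr 1; ext j
  ring

lemma projv_posSemidef (v : Fin n → ℂ) : (projv v).PosSemidef := by
  refine Matrix.PosSemidef.of_dotProduct_mulVec_nonneg (projv_isHermitian v) fun x => ?_
  have h2 : (∑ j, star (v j) * x j) = star (∑ i, star (x i) * v i) := by
    rw [star_sum]; congr 1; ext j; rw [StarMul.star_mul, star_star]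
  rw [projv_quad, h2]
  exact mul_star_self_nonneg _

lemma projv_mul_projv (v : Fin n → ℂ) (hv : ∑ i, star (v i) * v i = 1) :
    projv v * projv v = projv v := by
  ext i j
  simp only [Matrix.mul_apply, projv]
  calc ∑ k, v i * star (v k) * (v k * star (v j))
      = (v i * star (v j)) * ∑ k, star (v k) * v k := by
        rw [Finset.mul_sum]; congr 1; ext k; ring
    _ = v i * star (v j) := by rw [hv, mul_one]

lemma trace_smul_projv (c : ℂ) (v : Fin n → ℂ) (hv : ∑ i, star (v i) * v i = 1) :
    (c • projv v).trace = c := by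
  simp only [Matrix.trace, Matrix.diag, Matrix.smul_apply, projv, smul_eq_mul]
  rw [← Finset.mul_sum]
  have : ∑ i, v i * star (v i) = 1 := by
    rw [← hv]; congr 1; ext i; ring
  rw [this, mul_one]

end Aux
section Aux2

variable {n : ℕ}

lemma posSemidef_real_smul {M : Mat n} (hM : M.PosSemidef) {c : ℝ} (hc : 0 ≤ c) :
    ((c : ℂ) • M).PosSemidef := by
  refine Matrix.PosSemidef.of_dotProduct_mulVec_nonneg ?_ ?_
  · show ((c : ℂ) • M)ᴴ = (c : ℂ) • M
    rw [Matrix.conjTranspose_smul, hM.1.eq]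
    norm_num
  · intro x
    rw [Matrix.smul_mulVec, dotProduct_smul, smul_eq_mul]
    exact mul_nonneg (by exact_mod_cast hc) (hM.dotProduct_mulVec_nonneg x)

lemma posSemidef_sum {ι : Type} (s : Finset ι) (F : ι → Mat n)
    (h : ∀ i ∈ s, (F i).PosSemidef) : (∑ i ∈ s, F i).PosSemidef := by
  classical
  induction s using Finset.induction_on with
  | empty => simpa using Matrix.PosSemidef.zero
  | insert a t hx ih =>
    rw [Finset.sum_insert hx]
    exact (h a (Finset.mem_insert_self a t)).add
      (ih fun i hi => h i (Finset.mem_insert_of_mem hi))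

lemma kyFan_le_trace_re {A : Mat n} (hA : A.PosSemidef) (k : ℕ) :
    kyFan k A ≤ A.trace.re := by
  rw [kyFan, dif_pos hA.1]
  refine (sumTopK_le_sum k _ (fun i => hA.eigenvalues_nonneg i)).trans ?_
  rw [trace_eq_sum_eig hA.1, ← Complex.ofReal_sum, Complex.ofReal_re]

lemma kyFan_smul_projv {c : ℝ} (hc : 0 < c) (v : Fin n → ℂ)
    (hv : ∑ i, star (v i) * v i = 1) {k : ℕ} (hk : 1 ≤ k) :
    kyFan k ((c : ℂ) • projv v) = c := by
  set M : Mat n := (c : ℂ) • projv v with hMdef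
  have hpsd : M.PosSemidef := posSemidef_real_smul (projv_posSemidef v) hc.le
  have hH : M.IsHermitian := hpsd.1
  have hMM : M * M = (c : ℂ) • M := by
    rw [hMdef, Matrix.smul_mul, Matrix.mul_smul, projv_mul_projv v hv, smul_smul]
  have hdich : ∀ i, hH.eigenvalues i = 0 ∨ hH.eigenvalues i = c := by
    intro i
    set b : Fin n → ℂ := ⇑(hH.eigenvectorBasis i) with hbdef
    have hb : M *ᵥ b = hH.eigenvalues i • b := hH.mulVec_eigenvectorBasis i
    have hb0 : b ≠ 0 := by
      have hne := hH.eigenvectorBasis.orthonormal.ne_zero i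
      intro hcon
      apply hne
      ext j
      exact congrFun hcon j
    obtain ⟨j, hj⟩ := Function.ne_iff.mp hb0
    have h2 : M *ᵥ (M *ᵥ b) = (c : ℂ) • (M *ᵥ b) := by
      rw [Matrix.mulVec_mulVec, hMM, Matrix.smul_mulVec]
    rw [hb, Matrix.mulVec_smul, hb] at h2
    have h3 := congrFun h2 j
    simp only [Pi.smul_apply, Complex.real_smul, smul_eq_mul] at h3
    set lam := hH.eigenvalues i with hlam
    have h4 : ((lam : ℂ) * lam - (c : ℂ) * lam) * b j = 0 := by
      linear_combination h3
    have h5 : (lam : ℂ) * lam - (c : ℂ) * lam = 0 := by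
      rcases mul_eq_zero.mp h4 with h | h
      · exact h
      · exact absurd h hj
    have h5r : lam * lam - c * lam = 0 := by exact_mod_cast h5
    have h6 : lam * (lam - c) = 0 := by linear_combination h5r
    rcases mul_eq_zero.mp h6 with h | h
    · exact Or.inl h
    · exact Or.inr (by linarith)
  have hnn : ∀ i, 0 ≤ hH.eigenvalues i := fun i => hpsd.eigenvalues_nonneg i
  have hsum : ∑ i, hH.eigenvalues i = c := by
    have h := trace_eq_sum_eig hH
    have h2 : M.trace = (c : ℂ) := trace_smul_projv _ v hv
    have h3 : (c : ℂ) = ∑ i, (hH.eigenvalues i : ℂ) := h2.symm.trans h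
    exact_mod_cast h3.symm
  have hex : ∃ i, hH.eigenvalues i = c := by
    by_contra h
    push_neg at h
    have hz : ∀ i, hH.eigenvalues i = 0 := fun i => (hdich i).resolve_right (h i)
    rw [Finset.sum_eq_zero (fun i _ => hz i)] at hsum
    exact hc.ne hsum
  obtain ⟨i0, hi0⟩ := hex
  rw [kyFan, dif_pos hH]
  apply le_antisymm
  · rw [← hsum]; exact sumTopK_le_sum _ _ hnn
  · rw [← hi0]; exact le_sumTopK hk _ i0

end Aux2
section Aux3

variable {d : ℕ}

lemma kron_maxEnt_kron (A B C D : Mat d) (p q : Fin d × Fin d) :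
    ((A ⊗ₖ B) * maxEnt d * (C ⊗ₖ D)) p q
      = (d : ℂ)⁻¹ * ((∑ s, A p.1 s * B p.2 s) * ∑ t, C t q.1 * D t q.2) := by
  obtain ⟨i, j⟩ := p
  obtain ⟨k, l⟩ := q
  simp only [Matrix.mul_apply, Matrix.kroneckerMap_apply, maxEnt, Fintype.sum_prod_type,
    mul_ite, mul_zero, ite_mul, zero_mul, ite_and, Finset.sum_ite_irrel, Finset.sum_ite_eq,
    Finset.sum_ite_eq', Finset.mem_univ, if_true]
  simp only [Finset.sum_const_zero, zero_mul, Finset.sum_ite_eq, Finset.mem_univ, if_true]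
  rw [← Finset.mul_sum, ← Finset.sum_mul]
  ring

end Aux3
section Aux4

variable {d : ℕ}

lemma ptraceB_kron_proj_maxEnt (w u : Fin d → ℂ) (hu : ∑ i, star (u i) * u i = 1) :
    ptraceB ((projv w ⊗ₖ projv u) * maxEnt d * (projv w ⊗ₖ projv u))
      = ((d : ℂ)⁻¹ * ((∑ a, w a * u a) * ∑ a, star (w a) * star (u a))) • projv w := by
  ext i k
  simp only [ptraceB, Matrix.smul_apply, smul_eq_mul]
  simp only [kron_maxEnt_kron, projv]
  have e1 : ∀ j : Fin d, (∑ s, (w i * star (w s)) * (u j * star (u s)))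
      = (w i * u j) * ∑ s, star (w s) * star (u s) := by
    intro j
    rw [Finset.mul_sum]
    congr 1; ext s; ring
  have e2 : ∀ j : Fin d, (∑ t, (w t * star (w k)) * (u t * star (u j)))
      = (star (w k) * star (u j)) * ∑ t, w t * u t := by
    intro j
    rw [Finset.mul_sum]
    congr 1; ext t; ring
  rw [Finset.sum_congr rfl fun j _ => by rw [e1 j, e2 j]]
  have e3 : ∀ j : Fin d, (d:ℂ)⁻¹ * ((w i * u j * ∑ s, star (w s) * star (u s))
        * (star (w k) * star (u j) * ∑ t, w t * u t))
      = (u j * star (u j)) * ((d:ℂ)⁻¹ * ((∑ t, w t * u t) * ∑ s, star (w s) * star (u s))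
        * (w i * star (w k))) := fun j => by ring
  rw [Finset.sum_congr rfl fun j _ => e3 j, ← Finset.sum_mul]
  have h1 : ∑ j, u j * star (u j) = 1 := by
    rw [← hu]; apply Finset.sum_congr rfl; intro j _; ring
  rw [h1, one_mul]

lemma ptraceB_one_kron_proj_maxEnt (u : Fin d → ℂ) (hu : ∑ i, star (u i) * u i = 1) :
    ptraceB (((1 : Mat d) ⊗ₖ projv u) * maxEnt d * ((1 : Mat d) ⊗ₖ projv u))
      = (d : ℂ)⁻¹ • projv (star ∘ u) := by
  ext i k
  simp only [ptraceB, Matrix.smul_apply, smul_eq_mul]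
  simp only [kron_maxEnt_kron, Matrix.one_apply, projv, ite_mul, zero_mul, one_mul,
    Finset.sum_ite_eq, Finset.sum_ite_eq', Finset.mem_univ, if_true,
    Function.comp, star_star]
  have e3 : ∀ j : Fin d, (d:ℂ)⁻¹ * ((u j * star (u i)) * (u k * star (u j)))
      = (u j * star (u j)) * ((d:ℂ)⁻¹ * (star (u i) * u k)) := fun j => by ring
  rw [Finset.sum_congr rfl fun j _ => e3 j, ← Finset.sum_mul]
  have h1 : ∑ j, u j * star (u j) = 1 := by
    rw [← hu]; apply Finset.sum_congr rfl; intro j _; ring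
  rw [h1, one_mul]

end Aux4
section Aux5

variable {d : ℕ}

lemma meas_unit {u : Fin d → Fin d → ℂ} (hu : IsRankOneMeas u) (z : Fin d) :
    ∑ i, star (u z i) * u z i = 1 := by
  simpa using hu z z

lemma meas_unit' {u : Fin d → Fin d → ℂ} (hu : IsRankOneMeas u) (z : Fin d) :
    ∑ i, u z i * star (u z i) = 1 := by
  rw [← meas_unit hu z]
  apply Finset.sum_congr rfl; intro i _; ring

lemma meas_complete {v : Fin d → Fin d → ℂ} (hv : IsRankOneMeas v) (a b : Fin d) :
    ∑ z, v z a * star (v z b) = if a = b then 1 else 0 := by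
  have hBC : (Matrix.of fun z i => star (v z i)) * (Matrix.of fun i z => v z i) = (1 : Mat d) := by
    ext z z'
    rw [Matrix.mul_apply, Matrix.one_apply]
    simpa using hv z z'
  have hCB := mul_eq_one_comm.mp hBC
  have h := congrFun (congrFun hCB a) b
  rw [Matrix.mul_apply, Matrix.one_apply] at h
  simpa [mul_comm] using h

lemma stdMeas : IsRankOneMeas (fun z i : Fin d => if z = i then (1 : ℂ) else 0) := by
  intro z z'
  by_cases h : z = z'
  · subst h
    simp [apply_ite (star : ℂ → ℂ), ite_mul, Finset.sum_ite_eq]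
  · simp only [apply_ite (star : ℂ → ℂ), star_one, star_zero, ite_mul, zero_mul, one_mul]
    rw [if_neg h]
    apply Finset.sum_eq_zero
    intro i _
    by_cases h1 : z = i
    · subst h1
      rw [if_pos rfl, if_neg (fun hc => h hc.symm)]  -- careful
    · rw [if_neg h1]

lemma meas_star {v : Fin d → Fin d → ℂ} (hv : IsRankOneMeas v) :
    IsRankOneMeas (fun z => star ∘ v z) := by
  intro z z'
  have h : (∑ i, star ((star ∘ v z) i) * (star ∘ v z') i)
      = star (∑ i, star (v z i) * v z' i) := by
    rw [star_sum]
    apply Finset.sum_congr rfl; intro i _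
    simp only [Function.comp_apply, star_star, StarMul.star_mul]
    ring
  rw [h, hv z z']
  simp [apply_ite (star : ℂ → ℂ)]

end Aux5
section Aux6

variable {d : ℕ}

lemma ptraceB_sum {a b : ℕ} {ι : Type} (s : Finset ι) (F : ι → BMat a b) :
    ptraceB (∑ m ∈ s, F m) = ∑ m ∈ s, ptraceB (F m) := by
  ext i k
  simp only [ptraceB, Finset.sum_apply, Matrix.sum_apply]
  exact Finset.sum_comm

lemma star_sum_mul (w x : Fin d → ℂ) :
    (∑ a, star (w a) * star (x a)) = star (∑ a, w a * x a) := by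
  rw [star_sum]
  apply Finset.sum_congr rfl; intro a _
  rw [StarMul.star_mul]; ring

lemma sandwich (v : Fin d → Fin d → ℂ) (u0 : Fin d → ℂ) :
    ((1 : Mat d) ⊗ₖ projv u0) *
        (∑ m, (projv (v m) ⊗ₖ (1 : Mat d)) * maxEnt d * (projv (v m) ⊗ₖ (1 : Mat d))) *
        ((1 : Mat d) ⊗ₖ projv u0)
      = ∑ m, (projv (v m) ⊗ₖ projv u0) * maxEnt d * (projv (v m) ⊗ₖ projv u0) := by
  rw [Finset.mul_sum, Finset.sum_mul]
  apply Finset.sum_congr rfl; intro m _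
  have h1 : ((1 : Mat d) ⊗ₖ projv u0) * (projv (v m) ⊗ₖ (1 : Mat d))
      = projv (v m) ⊗ₖ projv u0 := by
    rw [← Matrix.mul_kronecker_mul, Matrix.one_mul, Matrix.mul_one]
  have h2 : (projv (v m) ⊗ₖ (1 : Mat d)) * ((1 : Mat d) ⊗ₖ projv u0)
      = projv (v m) ⊗ₖ projv u0 := by
    rw [← Matrix.mul_kronecker_mul, Matrix.one_mul, Matrix.mul_one]
  calc ((1 : Mat d) ⊗ₖ projv u0) *
        ((projv (v m) ⊗ₖ (1 : Mat d)) * maxEnt d * (projv (v m) ⊗ₖ (1 : Mat d))) *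
        ((1 : Mat d) ⊗ₖ projv u0)
      = (((1 : Mat d) ⊗ₖ projv u0) * (projv (v m) ⊗ₖ (1 : Mat d))) * maxEnt d *
        ((projv (v m) ⊗ₖ (1 : Mat d)) * ((1 : Mat d) ⊗ₖ projv u0)) := by
        simp only [Matrix.mul_assoc]
    _ = _ := by rw [h1, h2]

lemma sigma_eq (v : Fin d → Fin d → ℂ) (u : Fin d → ℂ) (hu : ∑ i, star (u i) * u i = 1) :
    ptraceB (((1 : Mat d) ⊗ₖ projv u) *
        (∑ m, (projv (v m) ⊗ₖ (1 : Mat d)) * maxEnt d * (projv (v m) ⊗ₖ (1 : Mat d))) *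
        ((1 : Mat d) ⊗ₖ projv u))
      = ∑ m, ((d : ℂ)⁻¹ * ((∑ a, v m a * u a) * star (∑ a, v m a * u a))) • projv (v m) := by
  rw [sandwich, ptraceB_sum]
  apply Finset.sum_congr rfl; intro m _
  rw [ptraceB_kron_proj_maxEnt (v m) u hu, star_sum_mul]

lemma sum_c_star_c {v : Fin d → Fin d → ℂ} (hv : IsRankOneMeas v) (u : Fin d → ℂ)
    (hu : ∑ i, u i * star (u i) = 1) :
    ∑ m, (∑ a, v m a * u a) * star (∑ a, v m a * u a) = 1 := by
  calc ∑ m, (∑ a, v m a * u a) * star (∑ a, v m a * u a)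
      = ∑ m, ∑ a, ∑ b, (v m a * u a) * (star (v m b) * star (u b)) := by
        apply Finset.sum_congr rfl; intro m _
        rw [← star_sum_mul, Finset.sum_mul_sum]
    _ = ∑ a, ∑ b, (u a * star (u b)) * ∑ m, v m a * star (v m b) := by
        rw [Finset.sum_comm]
        apply Finset.sum_congr rfl; intro a _
        rw [Finset.sum_comm]
        apply Finset.sum_congr rfl; intro b _
        rw [Finset.mul_sum]
        apply Finset.sum_congr rfl; intro m _; ring
    _ = ∑ a, u a * star (u a) := by
        apply Finset.sum_congr rfl; intro a _
        rw [Finset.sum_congr rfl fun b _ => by rw [meas_complete hv a b]]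
        simp
    _ = 1 := hu

end Aux6
section Aux7

variable {d : ℕ}

/-- The B-side post-measurement reduced state for the adversary-projected `maxEnt`. -/
def sigmaState (v : Fin d → Fin d → ℂ) (u : Fin d → ℂ) : Mat d :=
  ∑ m, ((d : ℂ)⁻¹ * ((∑ a, v m a * u a) * star (∑ a, v m a * u a))) • projv (v m)

lemma scalar_real (c : ℂ) : (d : ℂ)⁻¹ * (c * star c)
    = ((((d : ℝ)⁻¹ * Complex.normSq c : ℝ)) : ℂ) := by
  rw [Complex.star_def, Complex.mul_conj]
  push_cast
  ring

lemma sigmaState_psd (v : Fin d → Fin d → ℂ) (u : Fin d → ℂ) :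
    (sigmaState v u).PosSemidef := by
  refine posSemidef_sum _ _ fun m _ => ?_
  rw [scalar_real]
  exact posSemidef_real_smul (projv_posSemidef _)
    (mul_nonneg (by positivity) (Complex.normSq_nonneg _))

lemma sigmaState_trace {v : Fin d → Fin d → ℂ} (hv : IsRankOneMeas v) (u : Fin d → ℂ)
    (hu : ∑ i, u i * star (u i) = 1) :
    (sigmaState v u).trace = (d : ℂ)⁻¹ := by
  rw [sigmaState, Matrix.trace_sum,
    Finset.sum_congr rfl fun m _ => trace_smul_projv _ _ (meas_unit hv m),
    ← Finset.mul_sum, sum_c_star_c hv u hu, mul_one]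

lemma kyFan_sigmaState_le (hd : 0 < d) {v : Fin d → Fin d → ℂ} (hv : IsRankOneMeas v)
    (u : Fin d → ℂ) (hu : ∑ i, u i * star (u i) = 1) (k : ℕ) :
    kyFan k (sigmaState v u) ≤ (d : ℝ)⁻¹ := by
  refine (kyFan_le_trace_re (sigmaState_psd v u) k).trans_eq ?_
  rw [sigmaState_trace hv u hu]
  have hcast : ((d : ℂ))⁻¹ = (((d : ℝ)⁻¹ : ℝ) : ℂ) := by push_cast; ring
  rw [hcast, Complex.ofReal_re]

lemma kyFan_dinv_proj (hd : 0 < d) (w : Fin d → ℂ) (hw : ∑ i, star (w i) * w i = 1)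
    {k : ℕ} (hk : 1 ≤ k) : kyFan k ((d : ℂ)⁻¹ • projv w) = (d : ℝ)⁻¹ := by
  have hdR : (0 : ℝ) < d := by exact_mod_cast hd
  have hcast : ((d : ℂ))⁻¹ = (((d : ℝ)⁻¹ : ℝ) : ℂ) := by push_cast; ring
  rw [hcast]
  exact kyFan_smul_projv (by positivity) w hw hk

lemma sigmaState_star {v : Fin d → Fin d → ℂ} (hv : IsRankOneMeas v) (z : Fin d) :
    sigmaState v (star ∘ v z) = (d : ℂ)⁻¹ • projv (v z) := by
  rw [sigmaState]
  have hc : ∀ m, (∑ a, v m a * (star ∘ v z) a) = if m = z then 1 else 0 := by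
    intro m
    have h : (∑ a, v m a * (star ∘ v z) a) = star (∑ a, star (v m a) * v z a) := by
      rw [star_sum]
      apply Finset.sum_congr rfl; intro a _
      simp only [Function.comp_apply, StarMul.star_mul, star_star]
      ring
    rw [h, hv m z]
    simp [apply_ite (star : ℂ → ℂ)]
  rw [Finset.sum_congr rfl fun m _ => by rw [hc m]]
  have h2 : ∀ m : Fin d,
      ((d : ℂ)⁻¹ * ((if m = z then (1:ℂ) else 0) * star (if m = z then (1:ℂ) else 0))) • projv (v m)
        = if m = z then (d : ℂ)⁻¹ • projv (v z) else 0 := by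
    intro m
    by_cases h : m = z
    · subst h; simp
    · simp [h]
  rw [Finset.sum_congr rfl fun m _ => h2 m, Finset.sum_ite_eq' Finset.univ z,
    if_pos (Finset.mem_univ z)]

lemma score_const (hd : 0 < d) {c : ℕ} (T : Matrix (Fin d) (Fin c) ℝ) (hT : ColStochastic T)
    (f : Fin d → Fin c) : ∑ z : Fin d, ∑ w : Fin d, T w (f z) * (d : ℝ)⁻¹ = 1 := by
  have hdR : (0 : ℝ) < d := by exact_mod_cast hd
  have h1 : ∀ z : Fin d, ∑ w, T w (f z) * (d : ℝ)⁻¹ = (d : ℝ)⁻¹ := by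
    intro z
    rw [← Finset.sum_mul, hT.2 (f z), one_mul]
  rw [Finset.sum_congr rfl fun z _ => h1 z]
  simp only [Finset.sum_const, Finset.card_univ, Fintype.card_fin, nsmul_eq_mul]
  field_simp

end Aux7
/-- the reward of any gambling game on the maximally entangled state is 1. -/
theorem reward_maxEnt_eq_one {d c : ℕ} (hd : 0 < d) (hc : 0 < c)
    (T : Matrix (Fin d) (Fin c) ℝ) (hT : ColStochastic T)
    (p : ℝ) (hp0 : 0 ≤ p) (hp1 : p ≤ 1) :
    Rgame T p (maxEnt d) = 1 := by
  haveI hcne : Nonempty (Fin c) := ⟨⟨0, hc⟩⟩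
  haveI hfne : Nonempty (Fin d → Fin c) := ⟨fun _ => Classical.arbitrary _⟩
  haveI humeas : Nonempty {u : Fin d → Fin d → ℂ // IsRankOneMeas u} := ⟨⟨_, stdMeas⟩⟩
  -- value on maxEnt itself
  have hval1 : ∀ (u : {u : Fin d → Fin d → ℂ // IsRankOneMeas u}) (f : Fin d → Fin c),
      (∑ z, ∑ w : Fin d, T w (f z) * kyFan (w.1 + 1)
        (ptraceB (((1 : Mat d) ⊗ₖ projv (u.1 z)) * maxEnt d
          * ((1 : Mat d) ⊗ₖ projv (u.1 z))))) = 1 := by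
    intro u f
    have hk : ∀ z w : Fin d, kyFan (w.1 + 1)
        (ptraceB (((1 : Mat d) ⊗ₖ projv (u.1 z)) * maxEnt d
          * ((1 : Mat d) ⊗ₖ projv (u.1 z)))) = (d : ℝ)⁻¹ := by
      intro z w
      rw [ptraceB_one_kron_proj_maxEnt (u.1 z) (meas_unit u.2 z)]
      refine kyFan_dinv_proj hd _ ?_ (Nat.le_add_left 1 w.1)
      simp only [Function.comp_apply, star_star]
      exact meas_unit' u.2 z
    rw [Finset.sum_congr rfl fun z _ => Finset.sum_congr rfl fun w _ => by rw [hk z w]]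
    exact score_const hd T hT f
  have hR0max : R0 T (maxEnt d) = 1 := by
    unfold R0
    exact (iSup_congr fun u => (iSup_congr fun f => hval1 u f).trans ciSup_const).trans
      ciSup_const
  -- adversary part
  have hadv : ∀ v : {v : Fin d → Fin d → ℂ // IsRankOneMeas v},
      R0 T (∑ j, (projv (v.1 j) ⊗ₖ (1 : Mat d)) * maxEnt d
        * (projv (v.1 j) ⊗ₖ (1 : Mat d))) = 1 := by
    intro v
    set ρ' : BMat d d := ∑ j, (projv (v.1 j) ⊗ₖ (1 : Mat d)) * maxEnt d
      * (projv (v.1 j) ⊗ₖ (1 : Mat d)) with hρ'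
    have hsig : ∀ u : Fin d → ℂ, (∑ i, star (u i) * u i = 1) →
        ptraceB (((1 : Mat d) ⊗ₖ projv u) * ρ' * ((1 : Mat d) ⊗ₖ projv u))
          = sigmaState v.1 u := by
      intro u hu
      rw [hρ']
      exact sigma_eq v.1 u hu
    have hub : ∀ (u : {u : Fin d → Fin d → ℂ // IsRankOneMeas u}) (f : Fin d → Fin c),
        (∑ z, ∑ w : Fin d, T w (f z) * kyFan (w.1 + 1)
          (ptraceB (((1 : Mat d) ⊗ₖ projv (u.1 z)) * ρ'
            * ((1 : Mat d) ⊗ₖ projv (u.1 z))))) ≤ 1 := by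
      intro u f
      have hle : ∀ z w : Fin d, T w (f z) * kyFan (w.1 + 1)
          (ptraceB (((1 : Mat d) ⊗ₖ projv (u.1 z)) * ρ'
            * ((1 : Mat d) ⊗ₖ projv (u.1 z)))) ≤ T w (f z) * (d : ℝ)⁻¹ := by
        intro z w
        refine mul_le_mul_of_nonneg_left ?_ (hT.1 w (f z))
        rw [hsig (u.1 z) (meas_unit u.2 z)]
        exact kyFan_sigmaState_le hd v.2 _ (meas_unit' u.2 z) _
      calc (∑ z, ∑ w : Fin d, T w (f z) * kyFan (w.1 + 1)
          (ptraceB (((1 : Mat d) ⊗ₖ projv (u.1 z)) * ρ'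
            * ((1 : Mat d) ⊗ₖ projv (u.1 z)))))
          ≤ ∑ z, ∑ w : Fin d, T w (f z) * (d : ℝ)⁻¹ :=
            Finset.sum_le_sum fun z _ => Finset.sum_le_sum fun w _ => hle z w
        _ = 1 := score_const hd T hT f
    have heq : ∀ f : Fin d → Fin c,
        (∑ z, ∑ w : Fin d, T w (f z) * kyFan (w.1 + 1)
          (ptraceB (((1 : Mat d) ⊗ₖ projv (star ∘ v.1 z)) * ρ'
            * ((1 : Mat d) ⊗ₖ projv (star ∘ v.1 z))))) = 1 := by
      intro f
      have hk : ∀ z w : Fin d, kyFan (w.1 + 1)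
          (ptraceB (((1 : Mat d) ⊗ₖ projv (star ∘ v.1 z)) * ρ'
            * ((1 : Mat d) ⊗ₖ projv (star ∘ v.1 z)))) = (d : ℝ)⁻¹ := by
        intro z w
        rw [hsig (star ∘ v.1 z) (meas_unit (meas_star v.2) z), sigmaState_star v.2 z]
        exact kyFan_dinv_proj hd _ (meas_unit v.2 z) (Nat.le_add_left 1 w.1)
      rw [Finset.sum_congr rfl fun z _ => Finset.sum_congr rfl fun w _ => by rw [hk z w]]
      exact score_const hd T hT f
    unfold R0
    apply le_antisymm
    · exact Real.iSup_le (fun u => Real.iSup_le (fun f => hub u f) zero_le_one) zero_le_one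
    · have hbdd : BddAbove (Set.range fun u : {u : Fin d → Fin d → ℂ // IsRankOneMeas u} =>
          ⨆ f : Fin d → Fin c, ∑ z, ∑ w : Fin d, T w (f z) * kyFan (w.1 + 1)
            (ptraceB (((1 : Mat d) ⊗ₖ projv (u.1 z)) * ρ'
              * ((1 : Mat d) ⊗ₖ projv (u.1 z))))) := by
        refine ⟨1, ?_⟩
        rintro x ⟨u, rfl⟩
        exact Real.iSup_le (fun f => hub u f) zero_le_one
      refine le_ciSup_of_le hbdd ⟨fun z => star ∘ v.1 z, meas_star v.2⟩ ?_
      show (1 : ℝ) ≤ ⨆ f : Fin d → Fin c, ∑ z, ∑ w : Fin d, T w (f z) * kyFan (w.1 + 1)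
        (ptraceB (((1 : Mat d) ⊗ₖ projv (star ∘ v.1 z)) * ρ'
          * ((1 : Mat d) ⊗ₖ projv (star ∘ v.1 z))))
      have hbdd2 : BddAbove (Set.range fun f : Fin d → Fin c =>
          ∑ z, ∑ w : Fin d, T w (f z) * kyFan (w.1 + 1)
            (ptraceB (((1 : Mat d) ⊗ₖ projv (star ∘ v.1 z)) * ρ'
              * ((1 : Mat d) ⊗ₖ projv (star ∘ v.1 z))))) := by
        refine ⟨1, ?_⟩
        rintro x ⟨f, rfl⟩
        exact (heq f).le
      exact le_ciSup_of_le hbdd2 (Classical.arbitrary _) (heq _).ge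
  have hinf : (⨅ v : {v : Fin d → Fin d → ℂ // IsRankOneMeas v},
      R0 T (∑ j, (projv (v.1 j) ⊗ₖ (1 : Mat d)) * maxEnt d
        * (projv (v.1 j) ⊗ₖ (1 : Mat d)))) = 1 :=
    (iInf_congr hadv).trans ciInf_const
  unfold Rgame
  rw [hinf, hR0max]
  ring

end
end
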